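/- arXiv:2309.16810 — 3 statements merged into one kernel-verified Lean document; each statement's English description precedes it below -/
import Mathlib

section
/- Let I ⊆ R = K[x_1,...,x_n] be a monomial ideal generated in a single degree d that has a d-linear resolution. For a variable x, let I' be the monomial ideal whose minimal generating set is obtained from that of I by deleting all minimal generators divisible by x. Then I' is either the zero ideal or again has a d-linear resolution. -/
open MvPolynomial Module

noncomputable section

/-- The polynomial ring `K[x_1, ..., x_n]`. -/
abbrev PolyR (K : Type) [Field K] (n : ℕ) : Type := MvPolynomial (Fin n) K

variable (K : Type) [Field K] (n : ℕ)

/-- The Koszul differential on `K(x_1,...,x_n) ⊗ R`, where homological degree `i`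
elements are encoded as functions on `Finset (Fin n)` supported on sets of card `i`. -/
def kDiff : (Finset (Fin n) → PolyR K n) →ₗ[K] (Finset (Fin n) → PolyR K n) where
  toFun f T := ∑ k ∈ Tᶜ,
      ((-1 : ℤ) ^ (((insert k T).filter (fun j => j < k)).card)) • (X k * f (insert k T))
  map_add' f g := by
    funext T
    simp [mul_add, smul_add, Finset.sum_add_distrib]
  map_smul' c f := by
    funext T
    simp [Finset.smul_sum, mul_smul_comm, smul_comm c]

/-- The internal-degree-`j`, homological-degree-`i` component of the Koszul complex
of the ideal `I`: functions supported on subsets of cardinality `i`, whose values lie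
in `I` and are homogeneous of degree `j - i`. -/
def kosC (I : Ideal (PolyR K n)) (i j : ℕ) : Submodule K (Finset (Fin n) → PolyR K n) :=
  if i ≤ j then
    ⨅ S : Finset (Fin n),
      Submodule.comap (LinearMap.proj S)
        (if S.card = i then
            (Submodule.restrictScalars K I ⊓ homogeneousSubmodule (Fin n) K (j - i))
          else ⊥)
  else ⊥

/-- The graded Betti number `β_{i,j}(I) = dim_K Tor_i(I, K)_j`, computed as the dimension of
the `(i,j)`-th graded piece of the homology of the Koszul complex `K(x_1,...,x_n) ⊗ I`. -/
def bettiNum (I : Ideal (PolyR K n)) (i j : ℕ) : ℕ :=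
  finrank K ↥(kosC K n I i j ⊓ LinearMap.ker (kDiff K n))
    - finrank K ↥(Submodule.map (kDiff K n) (kosC K n I (i + 1) j)
        ⊓ (kosC K n I i j ⊓ LinearMap.ker (kDiff K n)))

/-- The Castelnuovo–Mumford regularity of a homogeneous ideal `I ⊆ K[x_1,...,x_n]`:
`reg I = max { j - i | β_{i,j}(I) ≠ 0 }`. -/
def CMreg (I : Ideal (PolyR K n)) : ℕ :=
  sSup {d : ℕ | ∃ i j : ℕ, bettiNum K n I i j ≠ 0 ∧ d = j - i}

/-- `I_⟨d⟩`: the ideal generated by the degree-`d` homogeneous component of `I`. -/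
def idealComponent (I : Ideal (PolyR K n)) (d : ℕ) : Ideal (PolyR K n) :=
  Ideal.span ((I : Set (PolyR K n)) ∩ {f | f.IsHomogeneous d})

/-- An ideal is componentwise linear if for every `d ≥ 0` the ideal `I_⟨d⟩` is zero or
has a `d`-linear resolution (equivalently, `reg (I_⟨d⟩) = d`). -/
def ComponentwiseLinear (I : Ideal (PolyR K n)) : Prop :=
  ∀ d : ℕ, idealComponent K n I d = ⊥ ∨ CMreg K n (idealComponent K n I d) = d

/-- A monomial ideal is an ideal generated by monomials. -/
def IsMonomialIdeal (I : Ideal (PolyR K n)) : Prop :=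
  ∃ A : Set (Fin n →₀ ℕ), I = Ideal.span ((fun a => monomial a (1 : K)) '' A)

/-- The set `G(I)` of (exponent vectors of) the minimal monomial generators of `I`:
monomials in `I` which are not divisible by any other monomial of `I`. -/
def minMonomialGens (I : Ideal (PolyR K n)) : Set (Fin n →₀ ℕ) :=
  {a | (monomial a (1 : K)) ∈ I ∧
    ∀ b : Fin n →₀ ℕ, b ≤ a → b ≠ a → (monomial b (1 : K)) ∉ I}

/-- Vertex splittable monomial ideals (Moradi–Khosh-Ahang):
`I = (v)`, `I = 0`, `I = R`, or `I = x I₁ + I₂` where `I₁, I₂` are vertex splittable ideals in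
`K[X ∖ {x}]`, `I₂ ⊆ I₁`, and `G(I)` is the disjoint union of `G(xI₁)` and `G(I₂)`. -/
inductive VertexSplittable : Ideal (PolyR K n) → Prop
  | principal (a : Fin n →₀ ℕ) : VertexSplittable (Ideal.span {(monomial a (1 : K) : PolyR K n)})
  | bot : VertexSplittable ⊥
  | top : VertexSplittable ⊤
  | split (x : Fin n) (I₁ I₂ : Ideal (PolyR K n)) :
      VertexSplittable I₁ → VertexSplittable I₂ →
      (∀ a ∈ minMonomialGens K n I₁, a x = 0) →
      (∀ a ∈ minMonomialGens K n I₂, a x = 0) →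
      I₂ ≤ I₁ →
      minMonomialGens K n (Ideal.span {(X x : PolyR K n)} * I₁ + I₂) =
        ((fun a => a + Finsupp.single x 1) '' minMonomialGens K n I₁) ∪
          minMonomialGens K n I₂ →
      Disjoint ((fun a => a + Finsupp.single x 1) '' minMonomialGens K n I₁)
        (minMonomialGens K n I₂) →
      VertexSplittable (Ideal.span {(X x : PolyR K n)} * I₁ + I₂)

/-- A monomial ideal has linear quotients if its minimal monomial generators can be
ordered `u_1, ..., u_m` so that each colon ideal `((u_1,...,u_{i-1}) : u_i)` is generated by
a subset of the variables. -/
def HasLinearQuotients (I : Ideal (PolyR K n)) : Prop :=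
  ∃ (m : ℕ) (u : Fin m → (Fin n →₀ ℕ)),
    Function.Injective u ∧
    minMonomialGens K n I = Set.range u ∧
    ∀ i : Fin m, 0 < (i : ℕ) →
      ∃ S : Set (Fin n),
        Submodule.colon
            (Ideal.span ((fun j : Fin m => (monomial (u j) (1 : K) : PolyR K n)) ''
              {j : Fin m | (j : ℕ) < (i : ℕ)}))
            (Ideal.span {(monomial (u i) (1 : K) : PolyR K n)}) =
          Ideal.span ((fun v => (X v : PolyR K n)) '' S)

/-- A weighted oriented graph on the vertex set `{x_1, ..., x_n}`: a set of directed edges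
(ordered pairs of distinct vertices) together with a weight function `w : V → ℤ_{≥1}`. -/
structure WOGraph (n : ℕ) where
  E : Set (Fin n × Fin n)
  w : Fin n → ℕ
  loopless : ∀ v, (v, v) ∉ E
  one_le_w : ∀ v, 1 ≤ w v

/-- The edge ideal `I(D) = (x y^{w(y)} : (x,y) ∈ E(D))` of a weighted oriented graph. -/
def edgeIdeal (D : WOGraph n) : Ideal (PolyR K n) :=
  Ideal.span {m : PolyR K n | ∃ e ∈ D.E, m = X e.1 * X e.2 ^ D.w e.2}

/-- The underlying simple graph of a weighted oriented graph. -/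
def underlying (D : WOGraph n) : SimpleGraph (Fin n) where
  Adj x y := x ≠ y ∧ ((x, y) ∈ D.E ∨ (y, x) ∈ D.E)
  symm := ⟨fun x y h => ⟨h.1.symm, h.2.symm⟩⟩
  loopless := ⟨fun x h => h.1 rfl⟩

/-- The simple graph `H(I(D)_⟨2⟩)`, whose edges are the pairs `{x,y}` with `xy ∈ I(D)`,
so that `I(H) = I(D)_⟨2⟩`. -/
def Hgraph (D : WOGraph n) : SimpleGraph (Fin n) where
  Adj x y := x ≠ y ∧ (X x * X y : PolyR K n) ∈ edgeIdeal K n D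
  symm := ⟨fun x y h => ⟨h.1.symm, by rw [mul_comm]; exact h.2⟩⟩
  loopless := ⟨fun x h => h.1 rfl⟩

/-- `f : Fin k → V` is an induced cycle of length `k` in `G`: `f` is injective and the
adjacencies among its image are exactly the consecutive (cyclic) ones. -/
def IsInducedCycle {V : Type} (G : SimpleGraph V) (k : ℕ) (f : Fin k → V) : Prop :=
  Function.Injective f ∧
    ∀ a b : Fin k, G.Adj (f a) (f b) ↔
      (((a : ℕ) + 1) % k = (b : ℕ) ∨ ((b : ℕ) + 1) % k = (a : ℕ))

/-- A simple graph is chordal if it has no induced cycle of length `≥ 4`. -/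
def Chordal {V : Type} (G : SimpleGraph V) : Prop :=
  ∀ k : ℕ, 4 ≤ k → ∀ f : Fin k → V, ¬ IsInducedCycle G k f

/-- A vertex cover of `G`: a set of vertices meeting every edge. -/
def IsVertexCover {V : Type} (G : SimpleGraph V) (C : Set V) : Prop :=
  ∀ ⦃x y : V⦄, G.Adj x y → x ∈ C ∨ y ∈ C

/-- A minimal vertex cover: a vertex cover minimal with respect to inclusion. -/
def IsMinimalVertexCover {V : Type} (G : SimpleGraph V) (C : Set V) : Prop :=
  IsVertexCover G C ∧ ∀ C' ⊆ C, IsVertexCover G C' → C' = C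

end

noncomputable section
namespace Stmt0Aux

variable {K : Type} [Field K] {n : ℕ}

def flt (x : Fin n) (p : PolyR K n) : PolyR K n :=
  ∑ m ∈ p.support.filter (fun a => a x = 0), monomial m (coeff m p)

lemma coeff_flt (x : Fin n) (p : PolyR K n) (a : Fin n →₀ ℕ) :
    coeff a (flt x p) = if a x = 0 then coeff a p else 0 := by
  unfold flt
  rw [coeff_sum]
  simp_rw [coeff_monomial]
  rw [Finset.sum_ite_eq' (p.support.filter (fun a => a x = 0)) a (fun m => coeff m p)]
  by_cases h : a x = 0 <;> by_cases hs : coeff a p = 0 <;>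
    simp [h, hs, Finset.mem_filter, MvPolynomial.mem_support_iff]

def dvx (x : Fin n) (p : PolyR K n) : PolyR K n :=
  MvPolynomial.divMonomial p (Finsupp.single x 1)

lemma coeff_dvx (x : Fin n) (p : PolyR K n) (a : Fin n →₀ ℕ) :
    coeff a (dvx x p) = coeff (Finsupp.single x 1 + a) p :=
  MvPolynomial.coeff_divMonomial _ _ _

lemma flt_zero (x : Fin n) : flt x (0 : PolyR K n) = 0 := by
  apply MvPolynomial.ext; intro a
  simp [coeff_flt]

lemma flt_add (x : Fin n) (p q : PolyR K n) : flt x (p + q) = flt x p + flt x q := by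
  apply MvPolynomial.ext; intro a
  simp only [coeff_flt, coeff_add]
  split <;> simp

lemma flt_sub (x : Fin n) (p q : PolyR K n) : flt x (p - q) = flt x p - flt x q := by
  apply MvPolynomial.ext; intro a
  simp only [coeff_flt, coeff_sub]
  split <;> simp

lemma flt_zsmul (x : Fin n) (z : ℤ) (p : PolyR K n) : flt x (z • p) = z • flt x p := by
  apply MvPolynomial.ext; intro a
  simp only [coeff_flt, coeff_smul]
  split <;> simp

lemma flt_sum {α : Type*} (x : Fin n) (s : Finset α) (g : α → PolyR K n) :
    flt x (∑ k ∈ s, g k) = ∑ k ∈ s, flt x (g k) := by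
  classical
  induction s using Finset.induction_on with
  | empty => simp [flt_zero]
  | insert _ _ h ih => rw [Finset.sum_insert h, Finset.sum_insert h, flt_add, ih]

lemma flt_flt (x : Fin n) (p : PolyR K n) : flt x (flt x p) = flt x p := by
  apply MvPolynomial.ext; intro a
  simp only [coeff_flt]
  split <;> simp

lemma dvx_zero (x : Fin n) : dvx x (0 : PolyR K n) = 0 := by
  apply MvPolynomial.ext; intro a
  simp [coeff_dvx]

lemma dvx_add (x : Fin n) (p q : PolyR K n) : dvx x (p + q) = dvx x p + dvx x q := by
  apply MvPolynomial.ext; intro a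
  simp [coeff_dvx]


lemma dvx_zsmul (x : Fin n) (z : ℤ) (p : PolyR K n) : dvx x (z • p) = z • dvx x p := by
  apply MvPolynomial.ext; intro a
  simp only [coeff_dvx, coeff_smul]

lemma dvx_sum {α : Type*} (x : Fin n) (s : Finset α) (g : α → PolyR K n) :
    dvx x (∑ k ∈ s, g k) = ∑ k ∈ s, dvx x (g k) := by
  classical
  induction s using Finset.induction_on with
  | empty => simp [dvx_zero]
  | insert _ _ h ih => rw [Finset.sum_insert h, Finset.sum_insert h, dvx_add, ih]

lemma single_add_apply_self (x : Fin n) (a : Fin n →₀ ℕ) :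
    ((Finsupp.single x 1 + a : Fin n →₀ ℕ)) x = a x + 1 := by
  rw [Finsupp.add_apply, Finsupp.single_apply]
  simp [add_comm]

lemma single_add_apply_ne (x k : Fin n) (a : Fin n →₀ ℕ) (h : k ≠ x) :
    ((Finsupp.single x 1 + a : Fin n →₀ ℕ)) k = a k := by
  rw [Finsupp.add_apply, Finsupp.single_apply, if_neg (Ne.symm h : ¬ x = k)]
  simp

lemma flt_X_mul (x k : Fin n) (p : PolyR K n) (h : k ≠ x) :
    flt x (X k * p) = X k * flt x p := by
  classical
  apply MvPolynomial.ext; intro a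
  rw [coeff_flt, coeff_X_mul', coeff_X_mul']
  by_cases hk : k ∈ a.support
  · rw [if_pos hk, if_pos hk, coeff_flt]
    have hax : ((a - Finsupp.single k 1 : Fin n →₀ ℕ)) x = a x := by
      rw [Finsupp.tsub_apply, Finsupp.single_apply, if_neg (fun hc : k = x => h hc), Nat.sub_zero]
    rw [hax]
  · rw [if_neg hk, if_neg hk]
    split <;> rfl

lemma flt_X_self_mul (x : Fin n) (p : PolyR K n) : flt x (X x * p) = 0 := by
  classical
  apply MvPolynomial.ext; intro a
  rw [coeff_flt, coeff_X_mul']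
  by_cases hx : a x = 0
  · rw [if_pos hx, if_neg (by simp [Finsupp.mem_support_iff, hx])]
    simp
  · rw [if_neg hx]
    simp

lemma dvx_X_self_mul (x : Fin n) (p : PolyR K n) : dvx x (X x * p) = p := by
  classical
  apply MvPolynomial.ext; intro a
  rw [coeff_dvx, coeff_X_mul']
  have hmem : x ∈ ((Finsupp.single x 1 + a : Fin n →₀ ℕ)).support := by
    rw [Finsupp.mem_support_iff, single_add_apply_self]
    omega
  rw [if_pos hmem, add_tsub_cancel_left]

lemma dvx_X_mul (x k : Fin n) (p : PolyR K n) (h : k ≠ x) :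
    dvx x (X k * p) = X k * dvx x p := by
  classical
  apply MvPolynomial.ext; intro a
  rw [coeff_dvx, coeff_X_mul', coeff_X_mul']
  have hmem : k ∈ ((Finsupp.single x 1 + a : Fin n →₀ ℕ)).support ↔ k ∈ a.support := by
    rw [Finsupp.mem_support_iff, Finsupp.mem_support_iff, single_add_apply_ne x k a h]
  by_cases hk : k ∈ a.support
  · rw [if_pos (hmem.mpr hk), if_pos hk, coeff_dvx]
    congr 1
    have hle : Finsupp.single k 1 ≤ a := by
      rw [Finsupp.single_le_iff]
      exact Nat.one_le_iff_ne_zero.mpr (Finsupp.mem_support_iff.mp hk)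
    exact add_tsub_assoc_of_le hle _
  · rw [if_neg (fun hc => hk (hmem.mp hc)), if_neg hk]

lemma X_mul_dvx (x : Fin n) (p : PolyR K n) (h : flt x p = 0) : X x * dvx x p = p := by
  classical
  apply MvPolynomial.ext; intro a
  rw [coeff_X_mul']
  by_cases hx : a x = 0
  · rw [if_neg (by simp [Finsupp.mem_support_iff, hx])]
    have := congrArg (coeff a) h
    rw [coeff_flt, if_pos hx] at this
    simpa using this.symm
  · rw [if_pos (by simp [Finsupp.mem_support_iff, hx]), coeff_dvx]
    congr 1
    have hle : Finsupp.single x 1 ≤ a := by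
      rw [Finsupp.single_le_iff]; omega
    exact add_tsub_cancel_of_le hle


-- degree helpers
lemma degree_eq_sum (d : Fin n →₀ ℕ) : Finsupp.degree d = ∑ i : Fin n, d i :=
  Finset.sum_subset (Finset.subset_univ _) (fun i _ hni => Finsupp.notMem_support_iff.mp hni)

lemma degree_single_one (x : Fin n) : Finsupp.degree (Finsupp.single x 1) = 1 := by
  rw [degree_eq_sum]
  simp [Finsupp.single_apply]

lemma degree_add (a b : Fin n →₀ ℕ) :
    Finsupp.degree (a + b) = Finsupp.degree a + Finsupp.degree b := by
  simp [degree_eq_sum, Finsupp.add_apply, Finset.sum_add_distrib]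

lemma degree_mono {a b : Fin n →₀ ℕ} (h : a ≤ b) : Finsupp.degree a ≤ Finsupp.degree b := by
  rw [degree_eq_sum, degree_eq_sum]
  exact Finset.sum_le_sum (fun i _ => Finsupp.le_def.mp h i)

lemma degree_strict_mono {a b : Fin n →₀ ℕ} (h : a ≤ b) (hne : a ≠ b) :
    Finsupp.degree a < Finsupp.degree b := by
  rw [degree_eq_sum, degree_eq_sum]
  obtain ⟨i, hi⟩ : ∃ i, a i ≠ b i := by
    by_contra hc
    push_neg at hc
    exact hne (Finsupp.ext hc)
  exact Finset.sum_lt_sum (fun i _ => Finsupp.le_def.mp h i)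
    ⟨i, Finset.mem_univ i, lt_of_le_of_ne (Finsupp.le_def.mp h i) hi⟩

lemma finsuppSum_eq_degree (a : Fin n →₀ ℕ) :
    (a.sum fun _ e => e) = Finsupp.degree a := rfl

-- homogeneity helpers
lemma isHom_iff {p : PolyR K n} {m : ℕ} :
    p.IsHomogeneous m ↔ ∀ d, coeff d p ≠ 0 → Finsupp.degree d = m := by
  constructor
  · intro hp d hd
    rw [Finsupp.degree_eq_weight_one]
    exact hp hd
  · intro hp d hd
    have h := hp d hd
    rw [Finsupp.degree_eq_weight_one] at h
    exact h

lemma flt_isHom {x : Fin n} {p : PolyR K n} {m : ℕ} (hp : p.IsHomogeneous m) :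
    (flt x p).IsHomogeneous m := by
  rw [isHom_iff] at hp ⊢
  intro d hd
  rw [coeff_flt] at hd
  by_cases h : d x = 0
  · exact hp d (by rwa [if_pos h] at hd)
  · rw [if_neg h] at hd; exact absurd rfl hd

lemma dvx_isHom {x : Fin n} {p : PolyR K n} {m : ℕ} (hp : p.IsHomogeneous m) :
    (dvx x p).IsHomogeneous (m - 1) := by
  rw [isHom_iff] at hp ⊢
  intro d hd
  rw [coeff_dvx] at hd
  have := hp _ hd
  rw [degree_add, degree_single_one] at this
  omega

lemma zsmul_isHom {p : PolyR K n} {m : ℕ} (z : ℤ) (hp : p.IsHomogeneous m) :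
    (z • p).IsHomogeneous m := by
  rw [isHom_iff] at hp ⊢
  intro d hd
  rw [coeff_smul] at hd
  exact hp d (fun hc => hd (by rw [hc, smul_zero]))

lemma support_flt (x : Fin n) (p : PolyR K n) : (flt x p).support ⊆ p.support := by
  intro m hm
  rw [MvPolynomial.mem_support_iff, coeff_flt] at hm
  rw [MvPolynomial.mem_support_iff]
  by_cases h : m x = 0
  · rwa [if_pos h] at hm
  · rw [if_neg h] at hm; exact absurd rfl hm

-- ideal-theoretic lemmas
lemma monomial_mem_span_iff {A : Set (Fin n →₀ ℕ)} {m : Fin n →₀ ℕ} :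
    monomial m (1 : K) ∈ Ideal.span ((fun a => (monomial a (1 : K) : PolyR K n)) '' A) ↔
      ∃ a ∈ A, a ≤ m := by
  rw [mem_ideal_span_monomial_image]
  classical
  simp [MvPolynomial.support_monomial, (one_ne_zero : (1 : K) ≠ 0)]

lemma exists_minGen {I : Ideal (PolyR K n)} (hmono : IsMonomialIdeal K n I)
    {m : Fin n →₀ ℕ} (hm : monomial m (1 : K) ∈ I) :
    ∃ c ∈ minMonomialGens K n I, c ≤ m := by
  obtain ⟨A, hA⟩ := hmono
  have H : ∀ N : ℕ, ∀ m : Fin n →₀ ℕ, Finsupp.degree m ≤ N → monomial m (1 : K) ∈ I →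
      ∃ c ∈ minMonomialGens K n I, c ≤ m := by
    intro N
    induction N using Nat.strong_induction_on with
    | _ N ih =>
      intro m hdm hmem
      by_cases hmin : m ∈ minMonomialGens K n I
      · exact ⟨m, hmin, le_rfl⟩
      · have : ∃ b : Fin n →₀ ℕ, b ≤ m ∧ b ≠ m ∧ monomial b (1 : K) ∈ I := by
          by_contra hc
          push_neg at hc
          exact hmin ⟨hmem, fun b hb hbne => hc b hb hbne⟩
        obtain ⟨b, hble, hbne, hbmem⟩ := this
        have hdb : Finsupp.degree b < Finsupp.degree m := degree_strict_mono hble hbne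
        by_cases hN : N = 0
        · omega
        · obtain ⟨c, hc, hcb⟩ := ih (Finsupp.degree b) (by omega) b le_rfl hbmem
          exact ⟨c, hc, le_trans hcb hble⟩
  exact H (Finsupp.degree m) m le_rfl hm


-- membership lemmas for the deleted ideal I'
section Idl

variable {I : Ideal (PolyR K n)} {x : Fin n}

/-- abbreviation for the deleted ideal -/
def delIdeal (I : Ideal (PolyR K n)) (x : Fin n) : Ideal (PolyR K n) :=
  Ideal.span ((fun a => (monomial a (1 : K) : PolyR K n)) ''
    {a ∈ minMonomialGens K n I | a x = 0})

lemma mem_delIdeal_iff {p : PolyR K n} :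
    p ∈ delIdeal I x ↔ ∀ m ∈ p.support,
      ∃ c, (c ∈ minMonomialGens K n I ∧ c x = 0) ∧ c ≤ m := by
  rw [delIdeal, mem_ideal_span_monomial_image]
  rfl

lemma delIdeal_le (hmono : IsMonomialIdeal K n I) : delIdeal I x ≤ I := by
  rw [delIdeal, Ideal.span_le]
  rintro q ⟨a, ⟨hamin, -⟩, rfl⟩
  exact hamin.1

lemma xfree_mem_delIdeal (hmono : IsMonomialIdeal K n I) {p : PolyR K n} (hp : p ∈ I)
    (hx : ∀ m ∈ p.support, (m : Fin n →₀ ℕ) x = 0) : p ∈ delIdeal I x := by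
  rw [mem_delIdeal_iff]
  intro m hm
  obtain ⟨A, hA⟩ := hmono
  have hmono' : IsMonomialIdeal K n I := ⟨A, hA⟩
  have hmI : monomial m (1 : K) ∈ I := by
    rw [hA] at hp ⊢
    rw [mem_ideal_span_monomial_image] at hp
    obtain ⟨a, haA, ham⟩ := hp m hm
    exact monomial_mem_span_iff.mpr ⟨a, haA, ham⟩
  obtain ⟨c, hc, hcm⟩ := exists_minGen hmono' hmI
  have hcx : c x = 0 := Nat.le_zero.mp (le_trans (Finsupp.le_def.mp hcm x) (le_of_eq (hx m hm)))
  exact ⟨c, ⟨hc, hcx⟩, hcm⟩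

lemma flt_mem_delIdeal_of_mem (hmono : IsMonomialIdeal K n I) {p : PolyR K n} (hp : p ∈ I) :
    flt x p ∈ delIdeal I x := by
  apply xfree_mem_delIdeal hmono
  · obtain ⟨A, hA⟩ := hmono
    rw [hA] at hp ⊢
    rw [mem_ideal_span_monomial_image] at hp ⊢
    exact fun m hm => hp m (support_flt x p hm)
  · intro m hm
    rw [MvPolynomial.mem_support_iff, coeff_flt] at hm
    by_cases h : m x = 0
    · exact h
    · rw [if_neg h] at hm; exact absurd rfl hm

lemma dvx_mem_delIdeal {p : PolyR K n} (hp : p ∈ delIdeal I x) : dvx x p ∈ delIdeal I x := by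
  rw [mem_delIdeal_iff] at hp ⊢
  intro m hm
  rw [MvPolynomial.mem_support_iff, coeff_dvx, ← MvPolynomial.mem_support_iff] at hm
  obtain ⟨c, ⟨hcmin, hcx⟩, hcm⟩ := hp _ hm
  refine ⟨c, ⟨hcmin, hcx⟩, ?_⟩
  rw [Finsupp.le_def]
  intro i
  by_cases hi : i = x
  · subst hi; simp [hcx]
  · have := Finsupp.le_def.mp hcm i
    rwa [single_add_apply_ne x i m (fun hc => hi hc)] at this

lemma flt_mem_delIdeal (hmono : IsMonomialIdeal K n I) {p : PolyR K n}
    (hp : p ∈ delIdeal I x) : flt x p ∈ delIdeal I x :=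
  flt_mem_delIdeal_of_mem hmono (delIdeal_le hmono hp)

lemma zsmul_mem_ideal {J : Ideal (PolyR K n)} {p : PolyR K n} (z : ℤ) (hp : p ∈ J) :
    z • p ∈ J :=
  Submodule.smul_of_tower_mem J z hp

lemma delIdeal_low_deg {d : ℕ}
    (hdeg : ∀ a ∈ minMonomialGens K n I, (a.sum fun _ e => e) = d)
    {p : PolyR K n} (hp : p ∈ delIdeal I x) {m : ℕ} (hm : m < d)
    (hhom : p.IsHomogeneous m) : p = 0 := by
  rw [MvPolynomial.eq_zero_iff]
  intro dd
  by_contra hc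
  rw [mem_delIdeal_iff] at hp
  obtain ⟨c, ⟨hcmin, -⟩, hcm⟩ := hp dd (MvPolynomial.mem_support_iff.mpr hc)
  have h1 : Finsupp.degree c = d := by
    rw [← finsuppSum_eq_degree]; exact hdeg c hcmin
  have h2 : Finsupp.degree dd = m := isHom_iff.mp hhom dd hc
  have := degree_mono hcm
  omega

end Idl

-- sign lemmas
def sg (k : Fin n) (T : Finset (Fin n)) : ℤ :=
  (-1) ^ ((insert k T).filter (fun j => j < k)).card

lemma kDiff_apply (f : Finset (Fin n) → PolyR K n) (T : Finset (Fin n)) :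
    kDiff K n f T = ∑ k ∈ Tᶜ, sg k T • (X k * f (insert k T)) := rfl

lemma sg_sq (k : Fin n) (T : Finset (Fin n)) : sg k T * sg k T = 1 := by
  unfold sg
  rw [← mul_pow]
  norm_num

lemma sg_not_mem {k : Fin n} {T : Finset (Fin n)} (h : k ∉ T) :
    sg k T = (-1) ^ (T.filter (fun j => j < k)).card := by
  unfold sg
  rw [Finset.filter_insert, if_neg (lt_irrefl k)]

lemma card_filter_insert {a : Fin n} {s : Finset (Fin n)} (p : Fin n → Prop) [DecidablePred p]
    (ha : a ∉ s) :
    ((insert a s).filter p).card = (s.filter p).card + if p a then 1 else 0 := by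
  rw [Finset.filter_insert]
  split
  · rw [Finset.card_insert_of_notMem (fun hc => ha (Finset.mem_of_mem_filter a hc))]
  · rw [Nat.add_zero]

lemma sg_cancel {x k : Fin n} {T : Finset (Fin n)} (hx : x ∈ T) (hk : k ∉ T) (hkx : k ≠ x) :
    sg k T * sg x (insert k (T.erase x)) = -(sg x (T.erase x) * sg k (T.erase x)) := by
  have hxe : x ∉ T.erase x := Finset.notMem_erase x T
  have hke : k ∉ T.erase x := fun hc => hk (Finset.mem_of_mem_erase hc)
  have hxik : x ∉ insert k (T.erase x) := by
    rw [Finset.mem_insert]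
    rintro (rfl | hc)
    · exact hkx rfl
    · exact hxe hc
  have hT : T = insert x (T.erase x) := (Finset.insert_erase hx).symm
  have hcard : (Finset.filter (fun j => j < k) T).card
      = (Finset.filter (fun j => j < k) (T.erase x)).card + if x < k then 1 else 0 := by
    conv_lhs => rw [hT]
    exact card_filter_insert _ hxe
  rw [sg_not_mem hk, sg_not_mem hxik, sg_not_mem hxe, sg_not_mem hke, hcard,
    card_filter_insert _ hke]
  rcases hkx.lt_or_gt with hlt | hlt
  · rw [if_neg (not_lt.mpr (le_of_lt hlt)), if_pos hlt, pow_add, pow_add]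
    ring
  · rw [if_pos hlt, if_neg (not_lt.mpr (le_of_lt hlt)), pow_add, pow_add]
    ring


-- chain-level operators
def P0 (x : Fin n) (f : Finset (Fin n) → PolyR K n) : Finset (Fin n) → PolyR K n :=
  fun S => if x ∈ S then 0 else flt x (f S)

def hh (x : Fin n) (f : Finset (Fin n) → PolyR K n) : Finset (Fin n) → PolyR K n :=
  fun S => if x ∈ S then sg x (S.erase x) • dvx x (f (S.erase x)) else 0

lemma P0_zero (x : Fin n) : P0 x (0 : Finset (Fin n) → PolyR K n) = 0 := by
  funext S
  simp [P0, flt_zero]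

lemma hh_zero (x : Fin n) : hh x (0 : Finset (Fin n) → PolyR K n) = 0 := by
  funext S
  simp [hh, dvx_zero]

lemma P0_P0 (x : Fin n) (f : Finset (Fin n) → PolyR K n) : P0 x (P0 x f) = P0 x f := by
  funext S
  by_cases h : x ∈ S <;> simp [P0, h, flt_flt]

lemma P0_kDiff (x : Fin n) (f : Finset (Fin n) → PolyR K n) :
    kDiff K n (P0 x f) = P0 x (kDiff K n f) := by
  funext T
  by_cases hx : x ∈ T
  · rw [kDiff_apply]
    have h0 : P0 x (kDiff K n f) T = 0 := by rw [P0, if_pos hx]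
    rw [h0]
    apply Finset.sum_eq_zero
    intro k hk
    have : P0 x f (insert k T) = 0 := by
      rw [P0, if_pos (Finset.mem_insert_of_mem hx)]
    rw [this, mul_zero, smul_zero]
  · have hR : P0 x (kDiff K n f) T = flt x (kDiff K n f T) := by rw [P0, if_neg hx]
    rw [hR, kDiff_apply, kDiff_apply, flt_sum]
    apply Finset.sum_congr rfl
    intro k hk
    rw [flt_zsmul]
    by_cases hkx : k = x
    · rw [hkx, flt_X_self_mul]
      have : P0 x f (insert x T) = 0 := by rw [P0, if_pos (Finset.mem_insert_self x T)]
      rw [this, mul_zero, smul_zero]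
    · have hxk : x ∉ insert k T := by
        rw [Finset.mem_insert]
        rintro (rfl | hc)
        · exact hkx rfl
        · exact hx hc
      have : P0 x f (insert k T) = flt x (f (insert k T)) := by rw [P0, if_neg hxk]
      rw [this, flt_X_mul x k _ hkx]

lemma homotopy (x : Fin n) (f : Finset (Fin n) → PolyR K n)
    (hf : ∀ S, x ∉ S → flt x (f S) = 0) :
    kDiff K n (hh x f) + hh x (kDiff K n f) = f := by
  funext T
  rw [Pi.add_apply]
  by_cases hx : x ∈ T
  · have hxc : x ∉ Tᶜ := by rwa [Finset.mem_compl, not_not]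
    have hA : kDiff K n (hh x f) T
        = ∑ k ∈ Tᶜ, (sg k T * sg x (insert k (T.erase x))) •
            (X k * dvx x (f (insert k (T.erase x)))) := by
      rw [kDiff_apply]
      apply Finset.sum_congr rfl
      intro k hk
      have hkT : k ∉ T := Finset.mem_compl.mp hk
      have hkx : k ≠ x := fun hc => hkT (hc ▸ hx)
      have hxik : x ∈ insert k T := Finset.mem_insert_of_mem hx
      have herase : (insert k T).erase x = insert k (T.erase x) :=
        Finset.erase_insert_of_ne hkx
      rw [hh, if_pos hxik, herase, mul_smul_comm, smul_smul]
    have hB : hh x (kDiff K n f) T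
        = f T + ∑ k ∈ Tᶜ, (sg x (T.erase x) * sg k (T.erase x)) •
            (X k * dvx x (f (insert k (T.erase x)))) := by
      rw [hh, if_pos hx, kDiff_apply, dvx_sum, Finset.smul_sum]
      have hcompl : (T.erase x)ᶜ = insert x Tᶜ := by
        ext a
        simp only [Finset.mem_compl, Finset.mem_erase, Finset.mem_insert]
        by_cases ha : a = x <;> simp [ha]
      rw [hcompl, Finset.sum_insert hxc]
      congr 1
      · rw [Finset.insert_erase hx, dvx_zsmul, smul_smul, sg_sq, dvx_X_self_mul, one_smul]
      · apply Finset.sum_congr rfl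
        intro k hk
        have hkT : k ∉ T := Finset.mem_compl.mp hk
        have hkx : k ≠ x := fun hc => hkT (hc ▸ hx)
        rw [dvx_zsmul, smul_smul, dvx_X_mul x k _ hkx]
    rw [hA, hB, ← add_assoc, add_comm _ (f T), add_assoc]
    conv_rhs => rw [← add_zero (f T)]
    congr 1
    rw [← Finset.sum_add_distrib]
    apply Finset.sum_eq_zero
    intro k hk
    have hkT : k ∉ T := Finset.mem_compl.mp hk
    have hkx : k ≠ x := fun hc => hkT (hc ▸ hx)
    rw [← add_smul, sg_cancel hx hkT hkx, neg_add_cancel, zero_smul]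
  · have hB : hh x (kDiff K n f) T = 0 := by rw [hh, if_neg hx]
    rw [hB, add_zero, kDiff_apply]
    have hxc : x ∈ Tᶜ := Finset.mem_compl.mpr hx
    rw [Finset.sum_eq_single_of_mem x hxc]
    · have herase : (insert x T).erase x = T := Finset.erase_insert hx
      rw [hh, if_pos (Finset.mem_insert_self x T), herase, mul_smul_comm, smul_smul, sg_sq,
        one_smul, X_mul_dvx x _ (hf T hx)]
    · intro k hk hkx
      have hkT : k ∉ T := Finset.mem_compl.mp hk
      have hxik : x ∉ insert k T := by
        rw [Finset.mem_insert]
        rintro (rfl | hc)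
        · exact hkx rfl
        · exact hx hc
      rw [hh, if_neg hxik, mul_zero, smul_zero]


-- kosC utilities
lemma mem_kosC {I : Ideal (PolyR K n)} {i j : ℕ} (hij : i ≤ j) (f : Finset (Fin n) → PolyR K n) :
    f ∈ kosC K n I i j ↔ ∀ S : Finset (Fin n),
      (S.card = i → f S ∈ I ∧ (f S).IsHomogeneous (j - i)) ∧ (S.card ≠ i → f S = 0) := by
  rw [kosC, if_pos hij, Submodule.mem_iInf]
  apply forall_congr'
  intro S
  rw [Submodule.mem_comap]
  have hproj : (LinearMap.proj S : (Finset (Fin n) → PolyR K n) →ₗ[K] PolyR K n) f = f S := rfl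
  rw [hproj]
  by_cases h : S.card = i
  · rw [if_pos h]
    simp [h, Submodule.mem_inf, mem_homogeneousSubmodule]
  · rw [if_neg h]
    simp [h, Submodule.mem_bot]

lemma kosC_eq_bot {I : Ideal (PolyR K n)} {i j : ℕ} (h : ¬ i ≤ j) : kosC K n I i j = ⊥ := by
  rw [kosC, if_neg h]

lemma kosC_mono {I J : Ideal (PolyR K n)} (h : I ≤ J) (i j : ℕ) :
    kosC K n I i j ≤ kosC K n J i j := by
  by_cases hij : i ≤ j
  · intro f hf
    rw [mem_kosC hij] at hf ⊢
    intro S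
    exact ⟨fun hc => ⟨h ((hf S).1 hc).1, ((hf S).1 hc).2⟩, (hf S).2⟩
  · rw [kosC_eq_bot hij, kosC_eq_bot hij]

lemma fd_homog (m : ℕ) : FiniteDimensional K ↥(homogeneousSubmodule (Fin n) K m) := by
  have hle : homogeneousSubmodule (Fin n) K m ≤ restrictTotalDegree (Fin n) K m := by
    intro p hp
    rw [mem_restrictTotalDegree]
    exact ((mem_homogeneousSubmodule _ _).mp hp).totalDegree_le
  exact Submodule.finiteDimensional_of_le hle

lemma fd_kosC (I : Ideal (PolyR K n)) (i j : ℕ) : FiniteDimensional K ↥(kosC K n I i j) := by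
  by_cases hij : i ≤ j
  · haveI := fd_homog (K := K) (n := n) (j - i)
    set V := homogeneousSubmodule (Fin n) K (j - i) with hV
    let Φ : (∀ _ : Finset (Fin n), ↥V) →ₗ[K] (Finset (Fin n) → PolyR K n) :=
      LinearMap.pi (fun S => V.subtype ∘ₗ LinearMap.proj S)
    have hle : kosC K n I i j ≤ LinearMap.range Φ := by
      intro f hf
      rw [mem_kosC hij] at hf
      refine ⟨fun S => ⟨f S, ?_⟩, rfl⟩
      by_cases h : S.card = i
      · exact (mem_homogeneousSubmodule _ _).mpr ((hf S).1 h).2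
      · rw [(hf S).2 h]
        exact Submodule.zero_mem V
    exact Submodule.finiteDimensional_of_le hle
  · rw [kosC_eq_bot hij]
    infer_instance

lemma betti_zero_of_cycles_le {I : Ideal (PolyR K n)} {i j : ℕ}
    (h : kosC K n I i j ⊓ LinearMap.ker (kDiff K n) ≤
      Submodule.map (kDiff K n) (kosC K n I (i + 1) j)) : bettiNum K n I i j = 0 := by
  rw [bettiNum, inf_eq_right.mpr h, Nat.sub_self]

lemma cycles_le_of_betti_zero {I : Ideal (PolyR K n)} {i j : ℕ}
    (h : bettiNum K n I i j = 0) :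
    kosC K n I i j ⊓ LinearMap.ker (kDiff K n) ≤
      Submodule.map (kDiff K n) (kosC K n I (i + 1) j) := by
  haveI := fd_kosC (K := K) (n := n) I i j
  haveI : FiniteDimensional K ↥(kosC K n I i j ⊓ LinearMap.ker (kDiff K n)) :=
    Submodule.finiteDimensional_of_le inf_le_left
  rw [bettiNum] at h
  have h1 : finrank K ↥(kosC K n I i j ⊓ LinearMap.ker (kDiff K n)) ≤
      finrank K ↥(Submodule.map (kDiff K n) (kosC K n I (i + 1) j) ⊓
        (kosC K n I i j ⊓ LinearMap.ker (kDiff K n))) := Nat.sub_eq_zero_iff_le.mp h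
  have h2 := Submodule.eq_of_le_of_finrank_le
    (inf_le_right : Submodule.map (kDiff K n) (kosC K n I (i + 1) j) ⊓
        (kosC K n I i j ⊓ LinearMap.ker (kDiff K n)) ≤ _) h1
  rw [← h2]
  exact inf_le_left

lemma betti_zero_of_not_le {I : Ideal (PolyR K n)} {i j : ℕ} (h : ¬ i ≤ j) :
    bettiNum K n I i j = 0 := by
  rw [bettiNum, kosC_eq_bot h, bot_inf_eq]
  simp

-- membership preservation
lemma P0_mem_kosC {I : Ideal (PolyR K n)} {x : Fin n} (hmono : IsMonomialIdeal K n I)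
    {i j : ℕ} (hij : i ≤ j) {f : Finset (Fin n) → PolyR K n} (hf : f ∈ kosC K n I i j) :
    P0 x f ∈ kosC K n (delIdeal I x) i j := by
  rw [mem_kosC hij] at hf ⊢
  intro S
  constructor
  · intro hc
    by_cases hxS : x ∈ S
    · rw [P0, if_pos hxS]
      exact ⟨zero_mem _, by rw [isHom_iff]; intro d hd; simp at hd⟩
    · rw [P0, if_neg hxS]
      exact ⟨flt_mem_delIdeal_of_mem hmono ((hf S).1 hc).1, flt_isHom ((hf S).1 hc).2⟩
  · intro hc
    by_cases hxS : x ∈ S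
    · rw [P0, if_pos hxS]
    · rw [P0, if_neg hxS, (hf S).2 hc, flt_zero]

lemma hh_mem_kosC {I : Ideal (PolyR K n)} {x : Fin n} {i j : ℕ} (hij : i + 1 ≤ j)
    {f : Finset (Fin n) → PolyR K n} (hf : f ∈ kosC K n (delIdeal I x) i j) :
    hh x f ∈ kosC K n (delIdeal I x) (i + 1) j := by
  rw [mem_kosC (Nat.le_of_succ_le hij)] at hf
  rw [mem_kosC hij]
  intro S
  constructor
  · intro hc
    by_cases hxS : x ∈ S
    · rw [hh, if_pos hxS]
      have hcard : (S.erase x).card = i := by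
        rw [Finset.card_erase_of_mem hxS, hc]
        omega
      obtain ⟨hmem, hhom⟩ := (hf (S.erase x)).1 hcard
      refine ⟨zsmul_mem_ideal _ (dvx_mem_delIdeal hmem), ?_⟩
      have hdz := zsmul_isHom (sg x (S.erase x)) (dvx_isHom (x := x) hhom)
      have heq : j - i - 1 = j - (i + 1) := by omega
      rwa [heq] at hdz
    · rw [hh, if_neg hxS]
      exact ⟨zero_mem _, by rw [isHom_iff]; intro d hd; simp at hd⟩
  · intro hc
    by_cases hxS : x ∈ S
    · rw [hh, if_pos hxS]
      have hne : (S.erase x).card ≠ i := by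
        have h1 := Finset.card_erase_of_mem hxS
        have h2 : 1 ≤ S.card := Finset.card_pos.mpr ⟨x, hxS⟩
        omega
      rw [(hf (S.erase x)).2 hne, dvx_zero, smul_zero]
    · rw [hh, if_neg hxS]


lemma P0_mem_kosC_del {I : Ideal (PolyR K n)} {x : Fin n} (hmono : IsMonomialIdeal K n I)
    {i j : ℕ} (hij : i ≤ j) {f : Finset (Fin n) → PolyR K n}
    (hf : f ∈ kosC K n (delIdeal I x) i j) : P0 x f ∈ kosC K n (delIdeal I x) i j := by
  rw [mem_kosC hij] at hf ⊢
  intro S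
  constructor
  · intro hc
    by_cases hxS : x ∈ S
    · rw [P0, if_pos hxS]
      exact ⟨zero_mem _, by rw [isHom_iff]; intro d hd; simp at hd⟩
    · rw [P0, if_neg hxS]
      exact ⟨flt_mem_delIdeal hmono ((hf S).1 hc).1, flt_isHom ((hf S).1 hc).2⟩
  · intro hc
    by_cases hxS : x ∈ S
    · rw [P0, if_pos hxS]
    · rw [P0, if_neg hxS, (hf S).2 hc, flt_zero]

/-- main vanishing lemma: the deleted ideal has no Betti numbers above degree `d`. -/
lemma betti_del_vanish {I : Ideal (PolyR K n)} (hmono : IsMonomialIdeal K n I) (x : Fin n)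
    {d : ℕ} (hd : 1 ≤ d) (hbound : ∀ i j : ℕ, bettiNum K n I i j ≠ 0 → j - i ≤ d)
    {i j : ℕ} (hgt : d < j - i) : bettiNum K n (delIdeal I x) i j = 0 := by
  by_cases hij : i ≤ j
  · apply betti_zero_of_cycles_le
    intro f hfmem
    obtain ⟨hfk, hfker⟩ := Submodule.mem_inf.mp hfmem
    have hker : kDiff K n f = 0 := LinearMap.mem_ker.mp hfker
    have hij1 : i + 1 ≤ j := by omega
    -- the x-free part f₀ = P0 x f
    have hf0mem : P0 x f ∈ kosC K n (delIdeal I x) i j := P0_mem_kosC_del hmono hij hfk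
    have hf0I : P0 x f ∈ kosC K n I i j := kosC_mono (delIdeal_le hmono) i j hf0mem
    have hdf0 : kDiff K n (P0 x f) = 0 := by rw [P0_kDiff, hker, P0_zero]
    have hbettiI : bettiNum K n I i j = 0 := by
      by_contra hb
      exact absurd (hbound i j hb) (not_le.mpr hgt)
    obtain ⟨g, hg, hgd⟩ := Submodule.mem_map.mp (cycles_le_of_betti_zero hbettiI
      (Submodule.mem_inf.mpr ⟨hf0I, LinearMap.mem_ker.mpr hdf0⟩))
    have hg0mem : P0 x g ∈ kosC K n (delIdeal I x) (i + 1) j := P0_mem_kosC hmono hij1 hg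
    have hdg0 : kDiff K n (P0 x g) = P0 x f := by rw [P0_kDiff, hgd, P0_P0]
    -- the part f₊ = f - P0 x f, divisible by x
    set fp := f - P0 x f with hfp
    have hfpmem : fp ∈ kosC K n (delIdeal I x) i j := sub_mem hfk hf0mem
    have hdfp : kDiff K n fp = 0 := by rw [hfp, map_sub, hker, hdf0, sub_zero]
    have hfpflt : ∀ S, x ∉ S → flt x (fp S) = 0 := by
      intro S hxS
      have hfpS : fp S = f S - flt x (f S) := by
        rw [hfp, Pi.sub_apply, P0, if_neg hxS]
      rw [hfpS, flt_sub, flt_flt, sub_self]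
    have hhom := homotopy x fp hfpflt
    rw [hdfp, hh_zero, add_zero] at hhom
    have hhhmem : hh x fp ∈ kosC K n (delIdeal I x) (i + 1) j := hh_mem_kosC hij1 hfpmem
    refine Submodule.mem_map.mpr ⟨P0 x g + hh x fp, add_mem hg0mem hhhmem, ?_⟩
    rw [map_add, hdg0, hhom, hfp]
    abel
  · exact betti_zero_of_not_le hij

/-- non-vanishing of `β_{0,d}` for the deleted ideal. -/
lemma betti_del_d {I : Ideal (PolyR K n)} {x : Fin n} {d : ℕ} (hd : 1 ≤ d)
    (hdeg : ∀ a ∈ minMonomialGens K n I, (a.sum fun _ e => e) = d)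
    {a₀ : Fin n →₀ ℕ} (ha₀min : a₀ ∈ minMonomialGens K n I) (ha₀x : a₀ x = 0) :
    bettiNum K n (delIdeal I x) 0 d ≠ 0 := by
  have h0d : (0 : ℕ) ≤ d := Nat.zero_le d
  have hbot : kosC K n (delIdeal I x) 1 d = ⊥ := by
    rw [eq_bot_iff]
    intro f hf
    rw [mem_kosC hd] at hf
    rw [Submodule.mem_bot]
    funext S
    show f S = 0
    by_cases hc : S.card = 1
    · obtain ⟨hm, hhom⟩ := (hf S).1 hc
      exact delIdeal_low_deg hdeg hm (by omega : d - 1 < d) hhom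
    · exact (hf S).2 hc
  have hker : kosC K n (delIdeal I x) 0 d ≤ LinearMap.ker (kDiff K n) := by
    intro f hf
    rw [mem_kosC h0d] at hf
    rw [LinearMap.mem_ker]
    funext T
    show kDiff K n f T = 0
    rw [kDiff_apply]
    apply Finset.sum_eq_zero
    intro k hk
    have hcard : (insert k T).card ≠ 0 :=
      Finset.card_ne_zero_of_mem (Finset.mem_insert_self k T)
    rw [(hf (insert k T)).2 hcard, mul_zero, smul_zero]
  have hZ : kosC K n (delIdeal I x) 0 d ⊓ LinearMap.ker (kDiff K n)
      = kosC K n (delIdeal I x) 0 d := inf_eq_left.mpr hker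
  rw [bettiNum, hZ]
  have h01 : (0 : ℕ) + 1 = 1 := rfl
  rw [h01, hbot, Submodule.map_bot, bot_inf_eq]
  rw [finrank_bot, Nat.sub_zero]
  -- exhibit a nonzero element
  set f0 : Finset (Fin n) → PolyR K n :=
    fun S => if S = (∅ : Finset (Fin n)) then monomial a₀ (1 : K) else 0 with hf0
  have hf0mem : f0 ∈ kosC K n (delIdeal I x) 0 d := by
    rw [mem_kosC h0d]
    intro S
    constructor
    · intro hc
      have hS : S = ∅ := Finset.card_eq_zero.mp hc
      rw [hf0]
      simp only [hS, if_pos rfl]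
      constructor
      · exact Ideal.subset_span ⟨a₀, ⟨ha₀min, ha₀x⟩, rfl⟩
      · have hdeg0 : Finsupp.degree a₀ = d - 0 := by
          rw [← finsuppSum_eq_degree, hdeg a₀ ha₀min]
          omega
        exact isHomogeneous_monomial _ hdeg0
    · intro hc
      have hS : S ≠ ∅ := fun hS => hc (by rw [hS]; exact Finset.card_empty)
      rw [hf0]
      simp only [if_neg hS]
  have hne : f0 ≠ 0 := by
    intro hcon
    have := congrFun hcon (∅ : Finset (Fin n))
    rw [hf0] at this
    simp only [if_pos rfl, Pi.zero_apply] at this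
    exact one_ne_zero (MvPolynomial.monomial_eq_zero.mp this)
  haveI := fd_kosC (K := K) (n := n) (delIdeal I x) 0 d
  intro h0
  have hbotC : kosC K n (delIdeal I x) 0 d = ⊥ := Submodule.finrank_eq_zero.mp h0
  rw [hbotC, Submodule.mem_bot] at hf0mem
  exact hne hf0mem

lemma bound_of_CMreg {I : Ideal (PolyR K n)} {d : ℕ} (hd : 1 ≤ d) (hlin : CMreg K n I = d) :
    ∀ i j : ℕ, bettiNum K n I i j ≠ 0 → j - i ≤ d := by
  intro i j hb
  rw [CMreg] at hlin
  have hmem : (j - i) ∈ {e : ℕ | ∃ i' j' : ℕ, bettiNum K n I i' j' ≠ 0 ∧ e = j' - i'} :=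
    ⟨i, j, hb, rfl⟩
  by_cases hbdd : BddAbove {e : ℕ | ∃ i' j' : ℕ, bettiNum K n I i' j' ≠ 0 ∧ e = j' - i'}
  · have := le_csSup hbdd hmem
    omega
  · rw [csSup_of_not_bddAbove hbdd, csSup_empty, Nat.bot_eq_zero] at hlin
    omega

lemma CMreg_eq_of {J : Ideal (PolyR K n)} {d : ℕ}
    (hub : ∀ i j : ℕ, bettiNum K n J i j ≠ 0 → j - i ≤ d)
    (hd : bettiNum K n J 0 d ≠ 0) : CMreg K n J = d := by
  rw [CMreg]
  have hmem : d ∈ {e : ℕ | ∃ i' j' : ℕ, bettiNum K n J i' j' ≠ 0 ∧ e = j' - i'} :=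
    ⟨0, d, hd, (Nat.sub_zero d).symm⟩
  have hub' : ∀ e ∈ {e : ℕ | ∃ i' j' : ℕ, bettiNum K n J i' j' ≠ 0 ∧ e = j' - i'}, e ≤ d := by
    rintro e ⟨i', j', hb, rfl⟩
    exact hub i' j' hb
  exact le_antisymm (csSup_le ⟨d, hmem⟩ hub') (le_csSup ⟨d, hub'⟩ hmem)

end Stmt0Aux

end

/-- If a monomial ideal `I` is generated in a single degree `d` and has a
`d`-linear resolution, then the ideal `I'` generated by the minimal generators of `I` not
divisible by the variable `x` is zero or again has a `d`-linear resolution. -/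
theorem stmt0 {K : Type} [Field K] {n : ℕ} (I : Ideal (PolyR K n)) (d : ℕ)
    (hmono : IsMonomialIdeal K n I) (hne : I ≠ ⊥)
    (hdeg : ∀ a ∈ minMonomialGens K n I, (a.sum fun _ e => e) = d)
    (hlin : CMreg K n I = d) (x : Fin n) :
    Ideal.span ((fun a => (monomial a (1 : K) : PolyR K n)) ''
        {a ∈ minMonomialGens K n I | a x = 0}) = ⊥ ∨
      CMreg K n (Ideal.span ((fun a => (monomial a (1 : K) : PolyR K n)) ''
        {a ∈ minMonomialGens K n I | a x = 0})) = d := by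
  classical
  rcases Set.eq_empty_or_nonempty {a ∈ minMonomialGens K n I | a x = 0} with hE | hE
  · left
    rw [hE, Set.image_empty, Ideal.span_empty]
  · right
    obtain ⟨a₀, ha₀⟩ := hE
    have ha₀min : a₀ ∈ minMonomialGens K n I := ha₀.1
    have ha₀x : a₀ x = 0 := ha₀.2
    have hA : (a₀.sum fun _ e => e) = d := hdeg a₀ ha₀min
    show CMreg K n (Stmt0Aux.delIdeal I x) = d
    rcases Nat.eq_zero_or_pos d with hd0 | hdpos
    · -- degree-zero case: both ideals are the unit ideal
      have ha₀0 : a₀ = 0 := by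
        have hdg : Finsupp.degree a₀ = 0 := by
          rw [← Stmt0Aux.finsuppSum_eq_degree]
          omega
        exact (Finsupp.degree_eq_zero_iff a₀).mp hdg
      have h1I' : (1 : PolyR K n) ∈ Stmt0Aux.delIdeal I x := by
        have hm : monomial a₀ (1 : K) ∈ Stmt0Aux.delIdeal I x :=
          Ideal.subset_span ⟨a₀, ⟨ha₀min, ha₀x⟩, rfl⟩
        rwa [ha₀0, monomial_zero', C_1] at hm
      have h1I : (1 : PolyR K n) ∈ I := by
        have hm := ha₀min.1
        rwa [ha₀0, monomial_zero', C_1] at hm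
      have hI' : Stmt0Aux.delIdeal I x = ⊤ := Ideal.eq_top_iff_one _ |>.mpr h1I'
      have hI : I = ⊤ := Ideal.eq_top_iff_one _ |>.mpr h1I
      rw [hI'] at *
      rw [hI] at hlin
      exact hlin
    · -- main case
      have hbound := Stmt0Aux.bound_of_CMreg hdpos hlin
      have hvanish : ∀ i j : ℕ, bettiNum K n (Stmt0Aux.delIdeal I x) i j ≠ 0 → j - i ≤ d := by
        intro i j hb
        by_contra hgt
        push_neg at hgt
        exact hb (Stmt0Aux.betti_del_vanish hmono x hdpos hbound hgt)
      exact Stmt0Aux.CMreg_eq_of hvanish (Stmt0Aux.betti_del_d hdpos hdeg ha₀min ha₀x)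
end

section
/- Let D_1 be the weighted oriented graph with vertices x_1, x_2, x_3, directed edges (x_1,x_2) and (x_2,x_3), and weights satisfying w(x_1) = 1, w(x_2) > 1, w(x_3) > 1, so that I(D_1) = (x_1 x_2^{w(x_2)}, x_2 x_3^{w(x_3)}). Then reg(I(D_1)) = w(x_1) + w(x_2) + w(x_3) - 1 > d_1 + 1, where d_1 = max{w(x_i) : i = 1,2,3}. -/
open MvPolynomial Module

open MvPolynomial Module Finsupp

noncomputable section
namespace S2

variable {K : Type} [Field K]

/-- coordinate unit vectors -/
def ee (k : Fin 3) : Fin 3 →₀ ℕ := Finsupp.single k 1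

def mm1 (a : ℕ) : Fin 3 →₀ ℕ := Finsupp.single 0 1 + Finsupp.single 1 a
def mm2 (b : ℕ) : Fin 3 →₀ ℕ := Finsupp.single 1 1 + Finsupp.single 2 b

def Idl (K : Type) [Field K] (a b : ℕ) : Ideal (PolyR K 3) :=
  Ideal.span ((fun s => (monomial s (1:K) : PolyR K 3)) '' {mm1 a, mm2 b})

lemma le3 {γ β : Fin 3 →₀ ℕ} : γ ≤ β ↔ γ 0 ≤ β 0 ∧ γ 1 ≤ β 1 ∧ γ 2 ≤ β 2 := by
  rw [Finsupp.le_def]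
  constructor
  · intro h; exact ⟨h 0, h 1, h 2⟩
  · rintro ⟨h0, h1, h2⟩ i
    fin_cases i <;> assumption

@[simp] lemma ee_apply (k i : Fin 3) : ee k i = if k = i then 1 else 0 := by
  simp [ee, Finsupp.single_apply]

@[simp] lemma mm1_apply (a : ℕ) (i : Fin 3) :
    mm1 a i = (if (0:Fin 3) = i then 1 else 0) + (if (1:Fin 3) = i then a else 0) := by
  simp [mm1, Finsupp.single_apply]

@[simp] lemma mm2_apply (b : ℕ) (i : Fin 3) :
    mm2 b i = (if (1:Fin 3) = i then 1 else 0) + (if (2:Fin 3) = i then b else 0) := by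
  simp [mm2, Finsupp.single_apply]

lemma Idl_eq (a b : ℕ) :
    Ideal.span ({X 0 * X 1 ^ a, X 1 * X 2 ^ b} : Set (PolyR K 3)) = Idl K a b := by
  unfold Idl
  rw [Set.image_pair]
  congr 2
  · rw [X_pow_eq_monomial, X, monomial_mul, one_mul]; rfl
  · rw [X_pow_eq_monomial, X, monomial_mul, one_mul]; rfl

lemma mem_Idl_iff {a b : ℕ} {p : PolyR K 3} :
    p ∈ Idl K a b ↔ ∀ β ∈ p.support, mm1 a ≤ β ∨ mm2 b ≤ β := by
  unfold Idl
  rw [mem_ideal_span_monomial_image]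
  simp

lemma coeff_eq_zero {a b : ℕ} {p : PolyR K 3} (hp : p ∈ Idl K a b) {β : Fin 3 →₀ ℕ}
    (h1 : ¬ mm1 a ≤ β) (h2 : ¬ mm2 b ≤ β) : coeff β p = 0 := by
  by_contra h
  rcases mem_Idl_iff.mp hp β (MvPolynomial.mem_support_iff.mpr h) with h' | h' <;> tauto

lemma monomial_mem_Idl {a b : ℕ} {β : Fin 3 →₀ ℕ} (h : mm1 a ≤ β ∨ mm2 b ≤ β) (c : K) :
    (monomial β c : PolyR K 3) ∈ Idl K a b := by
  obtain ⟨m, hm, hle⟩ : ∃ m, (m = mm1 a ∨ m = mm2 b) ∧ m ≤ β := by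
    rcases h with h | h
    · exact ⟨mm1 a, Or.inl rfl, h⟩
    · exact ⟨mm2 b, Or.inr rfl, h⟩
  have : (monomial β c : PolyR K 3) = monomial (β - m) c * monomial m 1 := by
    rw [monomial_mul, mul_one, tsub_add_cancel_of_le hle]
  rw [this]
  exact Ideal.mul_mem_left _ _ (Ideal.subset_span ⟨m, by rcases hm with rfl | rfl <;> simp, rfl⟩)

lemma weight_one_eq (β : Fin 3 →₀ ℕ) : (Finsupp.weight (1 : Fin 3 → ℕ)) β = β 0 + β 1 + β 2 := by
  rw [Finsupp.weight_apply, Finsupp.sum_fintype]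
  · simp [Fin.sum_univ_three]
  · intro i; simp

lemma mem_homog_iff {p : PolyR K 3} {d : ℕ} :
    p ∈ homogeneousSubmodule (Fin 3) K d ↔ ∀ β, coeff β p ≠ 0 → β 0 + β 1 + β 2 = d := by
  rw [mem_homogeneousSubmodule]
  unfold IsHomogeneous IsWeightedHomogeneous
  constructor
  · intro h β hβ; rw [← weight_one_eq β]; exact h hβ
  · intro h β hβ; rw [weight_one_eq β]; exact h β hβ

lemma homog_monomial {β : Fin 3 →₀ ℕ} {d : ℕ} (h : β 0 + β 1 + β 2 = d) (c : K) :
    (monomial β c : PolyR K 3) ∈ homogeneousSubmodule (Fin 3) K d := by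
  rw [mem_homog_iff]
  intro γ hγ
  rw [coeff_monomial] at hγ
  by_cases hc : γ = β
  · subst hc; exact h
  · simp [hc] at hγ; tauto

variable {K : Type} [Field K]

lemma cases8' : ∀ T : Finset (Fin 3), T = ∅ ∨ T = {0} ∨ T = {1} ∨ T = {2} ∨
    T = {0,1} ∨ T = {0,2} ∨ T = {1,2} ∨ T = {0,1,2} := by decide

lemma cases8 (T : Finset (Fin 3)) : T = ∅ ∨ T = {0} ∨ T = {1} ∨ T = {2} ∨
    T = {0,1} ∨ T = {0,2} ∨ T = {1,2} ∨ T = {0,1,2} := cases8' T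

lemma kDiff_apply (f : Finset (Fin 3) → PolyR K 3) (T : Finset (Fin 3)) :
    kDiff K 3 f T = ∑ k ∈ Tᶜ,
      ((-1 : ℤ) ^ (((insert k T).filter (fun j => j < k)).card)) • (X k * f (insert k T)) := rfl

lemma sum_compl3 {M : Type*} [AddCommMonoid M] (T : Finset (Fin 3)) (F : Fin 3 → M) :
    ∑ k ∈ Tᶜ, F k = (if 0 ∈ T then 0 else F 0) + ((if 1 ∈ T then 0 else F 1)
      + (if 2 ∈ T then 0 else F 2)) := by
  have : Tᶜ = Finset.univ.filter (fun k => k ∉ T) := by ext k; simp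
  rw [this, Finset.sum_filter, Fin.sum_univ_three]
  by_cases h0 : (0:Fin 3) ∈ T <;> by_cases h1 : (1:Fin 3) ∈ T
    <;> by_cases h2 : (2:Fin 3) ∈ T <;> simp [h0, h1, h2, add_assoc]

lemma mem_kosC_iff {I : Ideal (PolyR K 3)} {i j : ℕ} (hij : i ≤ j)
    {f : Finset (Fin 3) → PolyR K 3} :
    f ∈ kosC K 3 I i j ↔ ∀ S : Finset (Fin 3),
      (S.card = i → f S ∈ I ∧ f S ∈ homogeneousSubmodule (Fin 3) K (j - i)) ∧
      (S.card ≠ i → f S = 0) := by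
  unfold kosC
  rw [if_pos hij]
  simp only [Submodule.mem_iInf, Submodule.mem_comap, LinearMap.proj_apply]
  apply forall_congr'
  intro S
  by_cases h : S.card = i
  · rw [if_pos h]
    simp [h, Submodule.mem_inf]
  · rw [if_neg h]
    simp [h]

lemma kosC_bot {I : Ideal (PolyR K 3)} {i j : ℕ} (h : ¬ i ≤ j) : kosC K 3 I i j = ⊥ := by
  unfold kosC; rw [if_neg h]

lemma kosC_bot' (I : Ideal (PolyR K 3)) {i j : ℕ} (h : 3 < i) : kosC K 3 I i j = ⊥ := by
  by_cases hij : i ≤ j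
  · apply eq_bot_iff.mpr
    intro f hf
    rw [mem_kosC_iff hij] at hf
    have : f = 0 := by
      funext S
      refine (hf S).2 ?_
      have := S.card_le_univ
      simp only [Finset.card_univ, Fintype.card_fin] at this
      omega
    simp [this]
  · exact kosC_bot hij

/-- functions supported in homological degree 0,1,2,3 -/
def W0 (p : PolyR K 3) : Finset (Fin 3) → PolyR K 3 := fun T => if T = ∅ then p else 0
def W1 (p0 p1 p2 : PolyR K 3) : Finset (Fin 3) → PolyR K 3 := fun T =>
  if T = {0} then p0 else if T = {1} then p1 else if T = {2} then p2 else 0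
def W2 (q01 q02 q12 : PolyR K 3) : Finset (Fin 3) → PolyR K 3 := fun T =>
  if T = {0,1} then q01 else if T = {0,2} then q02 else if T = {1,2} then q12 else 0
def W3 (h : PolyR K 3) : Finset (Fin 3) → PolyR K 3 := fun T => if T = {0,1,2} then h else 0

lemma kDiff_W1 (p0 p1 p2 : PolyR K 3) :
    kDiff K 3 (W1 p0 p1 p2) = W0 (X 0 * p0 + (X 1 * p1 + X 2 * p2)) := by
  funext T
  rw [kDiff_apply, sum_compl3]
  rcases cases8 T with rfl | rfl | rfl | rfl | rfl | rfl | rfl | rfl <;>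
    simp +decide [W0, W1]

lemma kDiff_W2 (q01 q02 q12 : PolyR K 3) :
    kDiff K 3 (W2 q01 q02 q12) =
      W1 (-(X 1 * q01) + -(X 2 * q02)) (X 0 * q01 + -(X 2 * q12)) (X 0 * q02 + X 1 * q12) := by
  funext T
  rw [kDiff_apply, sum_compl3]
  rcases cases8 T with rfl | rfl | rfl | rfl | rfl | rfl | rfl | rfl <;>
    simp +decide [W1, W2] <;> ring

lemma kDiff_W3 (h : PolyR K 3) :
    kDiff K 3 (W3 h) = W2 (X 2 * h) (-(X 1 * h)) (X 0 * h) := by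
  funext T
  rw [kDiff_apply, sum_compl3]
  rcases cases8 T with rfl | rfl | rfl | rfl | rfl | rfl | rfl | rfl <;>
    simp +decide [W2, W3] <;> ring

lemma W1_mem_kosC {I : Ideal (PolyR K 3)} {j : ℕ} (hj : 1 ≤ j) {p0 p1 p2 : PolyR K 3}
    (h0 : p0 ∈ I) (h0' : p0 ∈ homogeneousSubmodule (Fin 3) K (j-1))
    (h1 : p1 ∈ I) (h1' : p1 ∈ homogeneousSubmodule (Fin 3) K (j-1))
    (h2 : p2 ∈ I) (h2' : p2 ∈ homogeneousSubmodule (Fin 3) K (j-1)) :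
    W1 p0 p1 p2 ∈ kosC K 3 I 1 j := by
  rw [mem_kosC_iff hj]
  intro S
  rcases cases8 S with rfl | rfl | rfl | rfl | rfl | rfl | rfl | rfl <;>
    refine ⟨fun hc => ?_, fun hc => ?_⟩ <;>
    simp +decide [W1] <;> first
      | exact absurd hc (by decide)
      | exact ⟨h0, h0'⟩ | exact ⟨h1, h1'⟩ | exact ⟨h2, h2'⟩

lemma W2_mem_kosC {I : Ideal (PolyR K 3)} {j : ℕ} (hj : 2 ≤ j) {q01 q02 q12 : PolyR K 3}
    (h0 : q01 ∈ I) (h0' : q01 ∈ homogeneousSubmodule (Fin 3) K (j-2))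
    (h1 : q02 ∈ I) (h1' : q02 ∈ homogeneousSubmodule (Fin 3) K (j-2))
    (h2 : q12 ∈ I) (h2' : q12 ∈ homogeneousSubmodule (Fin 3) K (j-2)) :
    W2 q01 q02 q12 ∈ kosC K 3 I 2 j := by
  rw [mem_kosC_iff hj]
  intro S
  rcases cases8 S with rfl | rfl | rfl | rfl | rfl | rfl | rfl | rfl <;>
    refine ⟨fun hc => ?_, fun hc => ?_⟩ <;>
    simp +decide [W2] <;> first
      | exact absurd hc (by decide)
      | exact ⟨h0, h0'⟩ | exact ⟨h1, h1'⟩ | exact ⟨h2, h2'⟩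

lemma W3_mem_kosC {I : Ideal (PolyR K 3)} {j : ℕ} (hj : 3 ≤ j) {h : PolyR K 3}
    (h0 : h ∈ I) (h0' : h ∈ homogeneousSubmodule (Fin 3) K (j-3)) :
    W3 h ∈ kosC K 3 I 3 j := by
  rw [mem_kosC_iff hj]
  intro S
  rcases cases8 S with rfl | rfl | rfl | rfl | rfl | rfl | rfl | rfl <;>
    refine ⟨fun hc => ?_, fun hc => ?_⟩ <;>
    simp +decide [W3] <;> first
      | exact absurd hc (by decide)
      | exact ⟨h0, h0'⟩

lemma kosC1_eq {I : Ideal (PolyR K 3)} {j : ℕ} (hj : 1 ≤ j) {f : Finset (Fin 3) → PolyR K 3}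
    (hf : f ∈ kosC K 3 I 1 j) : f = W1 (f {0}) (f {1}) (f {2}) := by
  rw [mem_kosC_iff hj] at hf
  funext T
  rcases cases8 T with rfl | rfl | rfl | rfl | rfl | rfl | rfl | rfl <;>
    simp +decide [W1] <;> exact (hf _).2 (by decide)

lemma kosC2_eq {I : Ideal (PolyR K 3)} {j : ℕ} (hj : 2 ≤ j) {f : Finset (Fin 3) → PolyR K 3}
    (hf : f ∈ kosC K 3 I 2 j) : f = W2 (f {0,1}) (f {0,2}) (f {1,2}) := by
  rw [mem_kosC_iff hj] at hf
  funext T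
  rcases cases8 T with rfl | rfl | rfl | rfl | rfl | rfl | rfl | rfl <;>
    simp +decide [W2] <;> exact (hf _).2 (by decide)

lemma kosC3_eq {I : Ideal (PolyR K 3)} {j : ℕ} (hj : 3 ≤ j) {f : Finset (Fin 3) → PolyR K 3}
    (hf : f ∈ kosC K 3 I 3 j) : f = W3 (f {0,1,2}) := by
  rw [mem_kosC_iff hj] at hf
  funext T
  rcases cases8 T with rfl | rfl | rfl | rfl | rfl | rfl | rfl | rfl <;>
    simp +decide [W3] <;> exact (hf _).2 (by decide)

lemma kosC0_eq {I : Ideal (PolyR K 3)} {j : ℕ} {f : Finset (Fin 3) → PolyR K 3}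
    (hf : f ∈ kosC K 3 I 0 j) : f = W0 (f ∅) := by
  rw [mem_kosC_iff (Nat.zero_le j)] at hf
  funext T
  rcases cases8 T with rfl | rfl | rfl | rfl | rfl | rfl | rfl | rfl <;>
    simp +decide [W0] <;> exact (hf _).2 (by decide)

lemma coeff_X_mul3 (k : Fin 3) (α : Fin 3 →₀ ℕ) (p : PolyR K 3) :
    coeff α (X k * p) = if ee k ≤ α then coeff (α - ee k) p else 0 := by
  rw [coeff_X_mul' α k p]
  congr 1
  · rw [eq_iff_iff, Finsupp.mem_support_iff]
    unfold ee
    rw [Finsupp.single_le_iff]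
    omega

lemma X_mul_mon {k : Fin 3} {γ : Fin 3 →₀ ℕ} (h : ee k ≤ γ) (c : K) :
    X k * (monomial (γ - ee k) c : PolyR K 3) = monomial γ c := by
  rw [X, monomial_mul, one_mul, add_comm]
  show (monomial (γ - ee k + ee k)) c = (monomial γ) c
  rw [tsub_add_cancel_of_le h]

lemma decompose3 (β : Fin 3 →₀ ℕ) :
    β = Finsupp.single 0 (β 0) + Finsupp.single 1 (β 1) + Finsupp.single 2 (β 2) := by
  ext i
  fin_cases i <;> simp [Finsupp.single_apply]

/-- reconstruction of a polynomial from a covering family of shifted exponents -/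
lemma sum_mon_eq (h : PolyR K 3) (γ : Fin 3 →₀ ℕ) (A : Finset (Fin 3 →₀ ℕ))
    (hA : ∀ β ∈ h.support, β + γ ∈ A) :
    ∑ α ∈ A, (monomial (α - γ) (if γ ≤ α then coeff (α - γ) h else 0) : PolyR K 3) = h := by
  have step1 : ∑ α ∈ A, (monomial (α - γ) (if γ ≤ α then coeff (α - γ) h else 0) : PolyR K 3)
      = ∑ α ∈ A.filter (fun α => γ ≤ α), (monomial (α - γ) (coeff (α - γ) h) : PolyR K 3) := by
    rw [Finset.sum_filter]
    apply Finset.sum_congr rfl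
    intro α _
    by_cases hα : γ ≤ α <;> simp [hα]
  rw [step1]
  have step2 : ∑ α ∈ A.filter (fun α => γ ≤ α), (monomial (α - γ) (coeff (α - γ) h) : PolyR K 3)
      = ∑ β ∈ (A.filter (fun α => γ ≤ α)).image (fun α => α - γ),
          (monomial β (coeff β h) : PolyR K 3) := by
    rw [Finset.sum_image]
    intro x hx y hy hxy
    have hx' : γ ≤ x := (Finset.mem_filter.mp hx).2
    have hy' : γ ≤ y := (Finset.mem_filter.mp hy).2
    have : x - γ + γ = y - γ + γ := by rw [show x - γ = y - γ from hxy]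
    rwa [tsub_add_cancel_of_le hx', tsub_add_cancel_of_le hy'] at this
  rw [step2]
  conv_rhs => rw [as_sum h]
  symm
  apply Finset.sum_subset
  · intro β hβ
    rw [Finset.mem_image]
    refine ⟨β + γ, Finset.mem_filter.mpr ⟨hA β hβ, le_add_self⟩, ?_⟩
    simp
  · intro β _ hβ
    rw [MvPolynomial.notMem_support_iff] at hβ
    simp [hβ]

section Arith
variable {a b : ℕ}

/-- vertices 0,1 ⇒ edge 01 -/
lemma conn01 (ha : 2 ≤ a) (hb : 2 ≤ b) {α : Fin 3 →₀ ℕ}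
    (hv0 : mm1 a + ee 0 ≤ α ∨ mm2 b + ee 0 ≤ α)
    (hv1 : mm1 a + ee 1 ≤ α ∨ mm2 b + ee 1 ≤ α) :
    mm1 a + (ee 0 + ee 1) ≤ α ∨ mm2 b + (ee 0 + ee 1) ≤ α := by
  simp +decide only [le3, Finsupp.add_apply, mm1_apply, mm2_apply, ee_apply, reduceIte] at *
  omega

/-- vertices 1,2 ⇒ edge 12 or edges 01, 02 -/
lemma conn12 (ha : 2 ≤ a) (hb : 2 ≤ b) {α : Fin 3 →₀ ℕ} {j : ℕ} (hj : a + b + 2 ≤ j)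
    (hdeg : α 0 + α 1 + α 2 = j)
    (hv1 : mm1 a + ee 1 ≤ α ∨ mm2 b + ee 1 ≤ α)
    (hv2 : mm1 a + ee 2 ≤ α ∨ mm2 b + ee 2 ≤ α) :
    (mm1 a + (ee 1 + ee 2) ≤ α ∨ mm2 b + (ee 1 + ee 2) ≤ α) ∨
    ((mm1 a + (ee 0 + ee 1) ≤ α ∨ mm2 b + (ee 0 + ee 1) ≤ α) ∧
     (mm1 a + (ee 0 + ee 2) ≤ α ∨ mm2 b + (ee 0 + ee 2) ≤ α)) := by
  simp +decide only [le3, Finsupp.add_apply, mm1_apply, mm2_apply, ee_apply, reduceIte] at *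
  omega

/-- vertices 0,2 ⇒ edge 02 or edges 01, 12 -/
lemma conn02 (ha : 2 ≤ a) (hb : 2 ≤ b) {α : Fin 3 →₀ ℕ} {j : ℕ} (hj : a + b + 2 ≤ j)
    (hdeg : α 0 + α 1 + α 2 = j)
    (hv0 : mm1 a + ee 0 ≤ α ∨ mm2 b + ee 0 ≤ α)
    (hv2 : mm1 a + ee 2 ≤ α ∨ mm2 b + ee 2 ≤ α) :
    (mm1 a + (ee 0 + ee 2) ≤ α ∨ mm2 b + (ee 0 + ee 2) ≤ α) ∨
    ((mm1 a + (ee 0 + ee 1) ≤ α ∨ mm2 b + (ee 0 + ee 1) ≤ α) ∧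
     (mm1 a + (ee 1 + ee 2) ≤ α ∨ mm2 b + (ee 1 + ee 2) ≤ α)) := by
  simp +decide only [le3, Finsupp.add_apply, mm1_apply, mm2_apply, ee_apply, reduceIte] at *
  omega

/-- all three edges ⇒ full triangle -/
lemma conn012 (ha : 2 ≤ a) (hb : 2 ≤ b) {α : Fin 3 →₀ ℕ}
    (h01 : mm1 a + (ee 0 + ee 1) ≤ α ∨ mm2 b + (ee 0 + ee 1) ≤ α)
    (h02 : mm1 a + (ee 0 + ee 2) ≤ α ∨ mm2 b + (ee 0 + ee 2) ≤ α)
    (h12 : mm1 a + (ee 1 + ee 2) ≤ α ∨ mm2 b + (ee 1 + ee 2) ≤ α) :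
    mm1 a + (ee 0 + (ee 1 + ee 2)) ≤ α ∨ mm2 b + (ee 0 + (ee 1 + ee 2)) ≤ α := by
  simp +decide only [le3, Finsupp.add_apply, mm1_apply, mm2_apply, ee_apply, reduceIte] at *
  omega

end Arith

lemma betti_eq_zero_of_le {I : Ideal (PolyR K 3)} {i j : ℕ}
    (h : kosC K 3 I i j ⊓ LinearMap.ker (kDiff K 3)
        ≤ Submodule.map (kDiff K 3) (kosC K 3 I (i+1) j)) :
    bettiNum K 3 I i j = 0 := by
  unfold bettiNum
  rw [inf_eq_right.mpr h, Nat.sub_self]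

lemma coeff_shift {q : PolyR K 3} {k l : Fin 3} (α : Fin 3 →₀ ℕ) (h : ee k ≤ α) :
    coeff (α - ee k) (X l * q) = if ee k + ee l ≤ α then coeff (α - (ee k + ee l)) q else 0 := by
  rw [coeff_X_mul3]
  by_cases h2 : ee k + ee l ≤ α
  · rw [if_pos, if_pos h2, tsub_tsub]
    rw [le_tsub_iff_right h, add_comm]
    exact h2
  · rw [if_neg, if_neg h2]
    rw [le_tsub_iff_right h, add_comm]
    exact h2

/-- membership/degree facts for a truncated coefficient -/
lemma cfact {a b j : ℕ} {q : PolyR K 3} (hq : q ∈ Idl K a b)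
    (hh : q ∈ homogeneousSubmodule (Fin 3) K j) (γ α : Fin 3 →₀ ℕ)
    (hne : (if γ ≤ α then coeff (α - γ) q else 0) ≠ 0) :
    (mm1 a + γ ≤ α ∨ mm2 b + γ ≤ α) ∧ (α 0 + α 1 + α 2 = j + (γ 0 + γ 1 + γ 2)) := by
  by_cases hγ : γ ≤ α
  · rw [if_pos hγ] at hne
    have hsupp : α - γ ∈ q.support := MvPolynomial.mem_support_iff.mpr hne
    have hmem := mem_Idl_iff.mp hq _ hsupp
    have hdeg := mem_homog_iff.mp hh _ hne
    constructor
    · rcases hmem with h | h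
      · exact Or.inl ((le_tsub_iff_right hγ).mp h)
      · exact Or.inr ((le_tsub_iff_right hγ).mp h)
    · have h0 : γ 0 ≤ α 0 ∧ γ 1 ≤ α 1 ∧ γ 2 ≤ α 2 := le3.mp hγ
      rw [Finsupp.tsub_apply, Finsupp.tsub_apply, Finsupp.tsub_apply] at hdeg
      omega
  · rw [if_neg hγ] at hne
    exact absurd rfl hne

lemma betti_ge4 (I : Ideal (PolyR K 3)) {i j : ℕ} (h : 3 < i) : bettiNum K 3 I i j = 0 := by
  apply betti_eq_zero_of_le
  rw [kosC_bot' I h]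
  simp

lemma betti3 (I : Ideal (PolyR K 3)) (j : ℕ) : bettiNum K 3 I 3 j = 0 := by
  apply betti_eq_zero_of_le
  rintro f ⟨hfk, hker⟩
  by_cases h3j : 3 ≤ j
  · have hfe := kosC3_eq h3j hfk
    have h0 : kDiff K 3 f = 0 := hker
    rw [hfe, kDiff_W3] at h0
    have h1 : X 2 * f {0,1,2} = 0 := by
      have := congrFun h0 {0,1}
      simpa [W2] using this
    have hp : f {0,1,2} = 0 := by
      rcases mul_eq_zero.mp h1 with h | h
      · exact absurd h (MvPolynomial.X_ne_zero 2)
      · exact h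
    have : f = 0 := by
      rw [hfe, hp]
      funext T
      simp [W3]
    rw [this]
    exact Submodule.zero_mem _
  · rw [kosC_bot h3j] at hfk
    rw [show f = 0 from hfk]
    exact Submodule.zero_mem _

lemma low_degree_zero {a b d : ℕ} (ha : 2 ≤ a) (hb : 2 ≤ b) (hd : d < 3) {q : PolyR K 3}
    (hq : q ∈ Idl K a b) (hh : q ∈ homogeneousSubmodule (Fin 3) K d) : q = 0 := by
  apply MvPolynomial.ext
  intro β
  rw [coeff_zero]
  by_contra hc
  have hs := mem_Idl_iff.mp hq β (MvPolynomial.mem_support_iff.mpr hc)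
  have hdeg := mem_homog_iff.mp hh β hc
  rw [le3, le3] at hs
  simp +decide only [mm1_apply, mm2_apply, reduceIte] at hs
  omega

lemma solve2 {a b j : ℕ} (ha : 2 ≤ a) (hb : 2 ≤ b) (hj : 3 ≤ j)
    {q01 q02 q12 : PolyR K 3}
    (m01 : q01 ∈ Idl K a b) (h01 : q01 ∈ homogeneousSubmodule (Fin 3) K (j-2))
    (m02 : q02 ∈ Idl K a b) (h02 : q02 ∈ homogeneousSubmodule (Fin 3) K (j-2))
    (m12 : q12 ∈ Idl K a b) (h12 : q12 ∈ homogeneousSubmodule (Fin 3) K (j-2))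
    (E0 : -(X 1 * q01) + -(X 2 * q02) = 0)
    (E1 : X 0 * q01 + -(X 2 * q12) = 0) :
    ∃ h : PolyR K 3, h ∈ Idl K a b ∧ h ∈ homogeneousSubmodule (Fin 3) K (j-3) ∧
      X 2 * h = q01 ∧ -(X 1 * h) = q02 ∧ X 0 * h = q12 := by
  set c01 : (Fin 3 →₀ ℕ) → K :=
    fun α => if ee 0 + ee 1 ≤ α then coeff (α - (ee 0 + ee 1)) q01 else 0 with hc01
  set c02 : (Fin 3 →₀ ℕ) → K :=
    fun α => if ee 0 + ee 2 ≤ α then coeff (α - (ee 0 + ee 2)) q02 else 0 with hc02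
  set c12 : (Fin 3 →₀ ℕ) → K :=
    fun α => if ee 1 + ee 2 ≤ α then coeff (α - (ee 1 + ee 2)) q12 else 0 with hc12
  have R1 : ∀ α, c02 α = -(c01 α) := by
    intro α
    by_cases h0 : ee 0 ≤ α
    · have h := congrArg (coeff (α - ee 0)) E0
      simp only [coeff_add, coeff_neg, coeff_zero] at h
      rw [coeff_shift α h0, coeff_shift α h0] at h
      rw [hc01, hc02]
      linear_combination -h
    · have n1 : ¬ (ee 0 + ee 1 ≤ α) := fun hcon => h0 (le_trans (self_le_add_right _ _) hcon)
      have n2 : ¬ (ee 0 + ee 2 ≤ α) := fun hcon => h0 (le_trans (self_le_add_right _ _) hcon)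
      rw [hc01, hc02]
      simp [n1, n2]
  have R2 : ∀ α, c12 α = c01 α := by
    intro α
    by_cases h1 : ee 1 ≤ α
    · have h := congrArg (coeff (α - ee 1)) E1
      simp only [coeff_add, coeff_neg, coeff_zero] at h
      rw [coeff_shift α h1, coeff_shift α h1] at h
      rw [add_comm (ee 1) (ee 0)] at h
      rw [hc01, hc12]
      linear_combination -h
    · have n1 : ¬ (ee 0 + ee 1 ≤ α) := fun hcon => h1 (le_trans le_add_self hcon)
      have n2 : ¬ (ee 1 + ee 2 ≤ α) := fun hcon => h1 (le_trans (self_le_add_right _ _) hcon)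
      rw [hc01, hc12]
      simp [n1, n2]
  -- triangle fact
  have K4 : ∀ α, c01 α ≠ 0 →
      ((mm1 a + (ee 0 + (ee 1 + ee 2)) ≤ α ∨ mm2 b + (ee 0 + (ee 1 + ee 2)) ≤ α) ∧
        α 0 + α 1 + α 2 = j) := by
    intro α hne
    have k01 := cfact m01 h01 (ee 0 + ee 1) α hne
    have hne2 : c02 α ≠ 0 := by rw [R1 α]; simpa using hne
    have hne3 : c12 α ≠ 0 := by rw [R2 α]; exact hne
    have k02 := cfact m02 h02 (ee 0 + ee 2) α hne2
    have k12 := cfact m12 h12 (ee 1 + ee 2) α hne3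
    refine ⟨conn012 ha hb k01.1 k02.1 k12.1, ?_⟩
    have := k01.2
    simp +decide only [Finsupp.add_apply, ee_apply, reduceIte] at this
    omega
  have e012_le : ∀ α, c01 α ≠ 0 → ee 0 + (ee 1 + ee 2) ≤ α := by
    intro α hne
    rcases (K4 α hne).1 with h | h
    · exact le_trans le_add_self h
    · exact le_trans le_add_self h
  set A : Finset (Fin 3 →₀ ℕ) :=
    q01.support.image (· + (ee 0 + ee 1)) ∪ q02.support.image (· + (ee 0 + ee 2)) ∪
      q12.support.image (· + (ee 1 + ee 2)) with hA
  have hA01 : ∀ β ∈ q01.support, β + (ee 0 + ee 1) ∈ A := by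
    intro β hβ
    exact Finset.mem_union_left _ (Finset.mem_union_left _
      (Finset.mem_image.mpr ⟨β, hβ, rfl⟩))
  have hA02 : ∀ β ∈ q02.support, β + (ee 0 + ee 2) ∈ A := by
    intro β hβ
    exact Finset.mem_union_left _ (Finset.mem_union_right _
      (Finset.mem_image.mpr ⟨β, hβ, rfl⟩))
  have hA12 : ∀ β ∈ q12.support, β + (ee 1 + ee 2) ∈ A := by
    intro β hβ
    exact Finset.mem_union_right _ (Finset.mem_image.mpr ⟨β, hβ, rfl⟩)
  refine ⟨∑ α ∈ A, monomial (α - (ee 0 + (ee 1 + ee 2))) (c01 α), ?_, ?_, ?_, ?_, ?_⟩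
  · apply Ideal.sum_mem
    intro α _
    by_cases hne : c01 α = 0
    · rw [hne, map_zero]; exact Ideal.zero_mem _
    · apply monomial_mem_Idl
      rcases (K4 α hne).1 with h | h
      · exact Or.inl ((le_tsub_iff_right (e012_le α hne)).mpr h)
      · exact Or.inr ((le_tsub_iff_right (e012_le α hne)).mpr h)
  · apply Submodule.sum_mem
    intro α _
    by_cases hne : c01 α = 0
    · rw [hne, map_zero]; exact Submodule.zero_mem _
    · apply homog_monomial
      have hd := (K4 α hne).2
      have hle := le3.mp (e012_le α hne)
      simp only [Finsupp.tsub_apply]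
      simp +decide only [Finsupp.add_apply, ee_apply, reduceIte] at hle ⊢
      omega
  · -- X 2 * h = q01
    rw [Finset.mul_sum]
    have step : ∀ α ∈ A, X 2 * (monomial (α - (ee 0 + (ee 1 + ee 2))) (c01 α) : PolyR K 3)
        = monomial (α - (ee 0 + ee 1)) (c01 α) := by
      intro α _
      by_cases hne : c01 α = 0
      · rw [hne, map_zero, map_zero, mul_zero]
      · have htri := e012_le α hne
        have h01le : ee 0 + ee 1 ≤ α := by
          refine le_trans ?_ htri
          rw [← add_assoc]
          exact self_le_add_right _ _
        have hcond : ee 2 ≤ α - (ee 0 + ee 1) := by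
          rw [le_tsub_iff_left h01le, add_assoc]
          exact htri
        have hexp : α - (ee 0 + (ee 1 + ee 2)) = (α - (ee 0 + ee 1)) - ee 2 := by
          rw [tsub_tsub, add_assoc]
        rw [hexp, X_mul_mon hcond]
    rw [Finset.sum_congr rfl step]
    simp only [hc01, hc02, hc12]
    exact sum_mon_eq q01 (ee 0 + ee 1) A hA01
  · -- -(X 1 * h) = q02
    rw [Finset.mul_sum, ← Finset.sum_neg_distrib]
    have step : ∀ α ∈ A, -(X 1 * (monomial (α - (ee 0 + (ee 1 + ee 2))) (c01 α) : PolyR K 3))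
        = monomial (α - (ee 0 + ee 2)) (c02 α) := by
      intro α _
      by_cases hne : c01 α = 0
      · rw [R1 α, hne]; simp
      · have htri := e012_le α hne
        rw [R1 α, map_neg]
        congr 1
        have h02le : ee 0 + ee 2 ≤ α := by
          refine le_trans (self_le_add_right (ee 0 + ee 2) (ee 1)) (le_trans (le_of_eq ?_) htri)
          abel
        have hcond : ee 1 ≤ α - (ee 0 + ee 2) := by
          rw [le_tsub_iff_left h02le]
          refine le_trans (le_of_eq ?_) htri
          abel
        have hexp : α - (ee 0 + (ee 1 + ee 2)) = (α - (ee 0 + ee 2)) - ee 1 := by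
          rw [tsub_tsub]
          congr 1
          abel
        rw [hexp, X_mul_mon hcond]
    rw [Finset.sum_congr rfl step]
    simp only [hc01, hc02, hc12]
    exact sum_mon_eq q02 (ee 0 + ee 2) A hA02
  · -- X 0 * h = q12
    rw [Finset.mul_sum]
    have step : ∀ α ∈ A, X 0 * (monomial (α - (ee 0 + (ee 1 + ee 2))) (c01 α) : PolyR K 3)
        = monomial (α - (ee 1 + ee 2)) (c12 α) := by
      intro α _
      by_cases hne : c01 α = 0
      · rw [R2 α, hne, map_zero, map_zero, mul_zero]
      · have htri := e012_le α hne
        rw [R2 α]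
        have h12le : ee 1 + ee 2 ≤ α := le_trans le_add_self htri
        have hcond : ee 0 ≤ α - (ee 1 + ee 2) := by
          rw [le_tsub_iff_left h12le, add_comm]
          exact htri
        have hexp : α - (ee 0 + (ee 1 + ee 2)) = (α - (ee 1 + ee 2)) - ee 0 := by
          rw [tsub_tsub, add_comm]
        rw [hexp, X_mul_mon hcond]
    rw [Finset.sum_congr rfl step]
    simp only [hc01, hc02, hc12]
    exact sum_mon_eq q12 (ee 1 + ee 2) A hA12

lemma betti2 {a b : ℕ} (ha : 2 ≤ a) (hb : 2 ≤ b) (j : ℕ) :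
    bettiNum K 3 (Idl K a b) 2 j = 0 := by
  apply betti_eq_zero_of_le
  rintro f ⟨hfk, hker⟩
  by_cases h2j : 2 ≤ j
  · have hfe := kosC2_eq h2j hfk
    have hm := (mem_kosC_iff h2j).mp hfk
    obtain ⟨m01, h01⟩ := (hm {0,1}).1 (by decide)
    obtain ⟨m02, h02⟩ := (hm {0,2}).1 (by decide)
    obtain ⟨m12, h12⟩ := (hm {1,2}).1 (by decide)
    have h0 : kDiff K 3 f = 0 := hker
    rw [hfe, kDiff_W2] at h0
    have E0 : -(X 1 * f {0,1}) + -(X 2 * f {0,2}) = 0 := by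
      have := congrFun h0 {0}
      simpa +decide [W1] using this
    have E1 : X 0 * f {0,1} + -(X 2 * f {1,2}) = 0 := by
      have := congrFun h0 {1}
      simpa +decide [W1] using this
    by_cases h3j : 3 ≤ j
    · obtain ⟨h, hmem, hhom, eq1, eq2, eq3⟩ :=
        solve2 ha hb h3j m01 h01 m02 h02 m12 h12 E0 E1
      refine ⟨W3 h, W3_mem_kosC h3j hmem hhom, ?_⟩
      rw [kDiff_W3, eq1, eq2, eq3]
      exact hfe.symm
    · have z01 : f {0,1} = 0 := low_degree_zero ha hb (by omega) m01 h01
      have z02 : f {0,2} = 0 := low_degree_zero ha hb (by omega) m02 h02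
      have z12 : f {1,2} = 0 := low_degree_zero ha hb (by omega) m12 h12
      have : f = 0 := by
        rw [hfe, z01, z02, z12]
        funext T
        simp [W2]
      rw [this]
      exact Submodule.zero_mem _
  · rw [kosC_bot h2j] at hfk
    rw [show f = 0 from hfk]
    exact Submodule.zero_mem _

lemma pick_var {a b j : ℕ} (ha : 2 ≤ a) (hb : 2 ≤ b) (hj : a + b + 1 ≤ j) {β : Fin 3 →₀ ℕ}
    (hm : mm1 a ≤ β ∨ mm2 b ≤ β) (hd : β 0 + β 1 + β 2 = j) :
    (mm1 a + ee 0 ≤ β ∨ mm2 b + ee 0 ≤ β) ∨ (mm1 a + ee 1 ≤ β ∨ mm2 b + ee 1 ≤ β) ∨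
      (mm1 a + ee 2 ≤ β ∨ mm2 b + ee 2 ≤ β) := by
  simp +decide only [le3, Finsupp.add_apply, mm1_apply, mm2_apply, ee_apply, reduceIte] at *
  omega

lemma betti0 {a b : ℕ} (ha : 2 ≤ a) (hb : 2 ≤ b) {j : ℕ} (hj : a + b + 1 ≤ j) :
    bettiNum K 3 (Idl K a b) 0 j = 0 := by
  apply betti_eq_zero_of_le
  rintro f ⟨hfk, _⟩
  have hfe := kosC0_eq hfk
  obtain ⟨mp, hp⟩ := ((mem_kosC_iff (Nat.zero_le j)).mp hfk ∅).1 (by decide)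
  rw [Nat.sub_zero] at hp
  set p := f ∅ with hpdef
  have hex : ∀ β, ∃ k : Fin 3, β ∈ p.support → (mm1 a + ee k ≤ β ∨ mm2 b + ee k ≤ β) := by
    intro β
    by_cases hβ : β ∈ p.support
    · rcases pick_var ha hb hj (mem_Idl_iff.mp mp β hβ)
        (mem_homog_iff.mp hp β (MvPolynomial.mem_support_iff.mp hβ)) with h | h | h
      · exact ⟨0, fun _ => h⟩
      · exact ⟨1, fun _ => h⟩
      · exact ⟨2, fun _ => h⟩
    · exact ⟨0, fun h => absurd h hβ⟩
  choose kf hkf using hex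
  set gk : Fin 3 → PolyR K 3 := fun k' =>
    ∑ β ∈ p.support.filter (fun β => kf β = k'),
      monomial (β - ee k') (coeff β p) with hgk
  have hgmem : ∀ k' : Fin 3, gk k' ∈ Idl K a b := by
    intro k'
    apply Ideal.sum_mem
    intro β hβ
    obtain ⟨hβs, hβk⟩ := Finset.mem_filter.mp hβ
    have hm' := hkf β hβs
    rw [hβk] at hm'
    have heek : ee k' ≤ β := by
      rcases hm' with h | h
      · exact le_trans le_add_self h
      · exact le_trans le_add_self h
    apply monomial_mem_Idl
    rcases hm' with h | h
    · exact Or.inl ((le_tsub_iff_right heek).mpr h)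
    · exact Or.inr ((le_tsub_iff_right heek).mpr h)
  have hghom : ∀ k' : Fin 3, gk k' ∈ homogeneousSubmodule (Fin 3) K (j - 1) := by
    intro k'
    apply Submodule.sum_mem
    intro β hβ
    obtain ⟨hβs, hβk⟩ := Finset.mem_filter.mp hβ
    have hm' := hkf β hβs
    rw [hβk] at hm'
    have heek : ee k' ≤ β := by
      rcases hm' with h | h
      · exact le_trans le_add_self h
      · exact le_trans le_add_self h
    apply homog_monomial
    have hd := mem_homog_iff.mp hp β (MvPolynomial.mem_support_iff.mp hβs)
    have hle := le3.mp heek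
    simp only [Finsupp.tsub_apply]
    fin_cases k' <;> simp +decide only [ee_apply, reduceIte] at hle ⊢ <;> omega
  refine ⟨W1 (gk 0) (gk 1) (gk 2), W1_mem_kosC (by omega) (hgmem 0) (hghom 0)
    (hgmem 1) (hghom 1) (hgmem 2) (hghom 2), ?_⟩
  rw [kDiff_W1]
  have key : X 0 * gk 0 + (X 1 * gk 1 + X 2 * gk 2) = p := by
    have term : ∀ k' : Fin 3, X k' * gk k'
        = ∑ β ∈ p.support.filter (fun β => kf β = k'), monomial β (coeff β p) := by
      intro k'
      rw [hgk, Finset.mul_sum]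
      apply Finset.sum_congr rfl
      intro β hβ
      obtain ⟨hβs, hβk⟩ := Finset.mem_filter.mp hβ
      have hm' := hkf β hβs
      rw [hβk] at hm'
      have heek : ee k' ≤ β := by
        rcases hm' with h | h
        · exact le_trans le_add_self h
        · exact le_trans le_add_self h
      exact X_mul_mon heek _
    rw [term 0, term 1, term 2, ← add_assoc]
    rw [show ∀ x y z : PolyR K 3, x + y + z = ((x + y) + z) from fun _ _ _ => rfl]
    rw [← Fin.sum_univ_three (fun k' => ∑ β ∈ p.support.filter (fun β => kf β = k'),
      (monomial β (coeff β p) : PolyR K 3))]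
    rw [Finset.sum_fiberwise p.support kf (fun β => (monomial β (coeff β p) : PolyR K 3))]
    exact (as_sum p).symm
  rw [key]
  exact hfe.symm

lemma Xmul_term {k : Fin 3} {ν α : Fin 3 →₀ ℕ} (d : K) (hle : d ≠ 0 → ν + ee k ≤ α) :
    X k * (monomial (α - (ν + ee k)) d : PolyR K 3) = monomial (α - ν) d := by
  by_cases hd : d = 0
  · rw [hd, map_zero, map_zero, mul_zero]
  · have hμ := hle hd
    have hν : ν ≤ α := le_trans (self_le_add_right _ _) hμ
    have hexp : α - (ν + ee k) = (α - ν) - ee k := by rw [tsub_tsub]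
    have hcond : ee k ≤ α - ν := by
      rw [le_tsub_iff_left hν]
      exact hμ
    rw [hexp, X_mul_mon hcond]

lemma solve1 {a b j : ℕ} (ha : 2 ≤ a) (hb : 2 ≤ b) (hj : a + b + 2 ≤ j)
    {f0 f1 f2 : PolyR K 3}
    (mf0 : f0 ∈ Idl K a b) (hf0 : f0 ∈ homogeneousSubmodule (Fin 3) K (j-1))
    (mf1 : f1 ∈ Idl K a b) (hf1 : f1 ∈ homogeneousSubmodule (Fin 3) K (j-1))
    (mf2 : f2 ∈ Idl K a b) (hf2 : f2 ∈ homogeneousSubmodule (Fin 3) K (j-1))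
    (E : X 0 * f0 + (X 1 * f1 + X 2 * f2) = 0) :
    ∃ q01 q02 q12 : PolyR K 3,
      (q01 ∈ Idl K a b ∧ q01 ∈ homogeneousSubmodule (Fin 3) K (j-2)) ∧
      (q02 ∈ Idl K a b ∧ q02 ∈ homogeneousSubmodule (Fin 3) K (j-2)) ∧
      (q12 ∈ Idl K a b ∧ q12 ∈ homogeneousSubmodule (Fin 3) K (j-2)) ∧
      -(X 1 * q01) + -(X 2 * q02) = f0 ∧
      X 0 * q01 + -(X 2 * q12) = f1 ∧
      X 0 * q02 + X 1 * q12 = f2 := by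
  set c0 : (Fin 3 →₀ ℕ) → K :=
    fun α => if ee 0 ≤ α then coeff (α - ee 0) f0 else 0 with hc0
  set c1 : (Fin 3 →₀ ℕ) → K :=
    fun α => if ee 1 ≤ α then coeff (α - ee 1) f1 else 0 with hc1
  set c2 : (Fin 3 →₀ ℕ) → K :=
    fun α => if ee 2 ≤ α then coeff (α - ee 2) f2 else 0 with hc2
  have Hsum : ∀ α, c0 α + (c1 α + c2 α) = 0 := by
    intro α
    have h := congrArg (coeff α) E
    simp only [coeff_add, coeff_zero] at h
    rw [coeff_X_mul3, coeff_X_mul3, coeff_X_mul3] at h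
    rw [hc0, hc1, hc2]
    exact h
  have HV0 : ∀ α, c0 α ≠ 0 →
      (mm1 a + ee 0 ≤ α ∨ mm2 b + ee 0 ≤ α) ∧ α 0 + α 1 + α 2 = j := by
    intro α hne
    have h := cfact mf0 hf0 (ee 0) α hne
    refine ⟨h.1, ?_⟩
    have h2 := h.2
    simp +decide only [ee_apply, reduceIte] at h2
    omega
  have HV1 : ∀ α, c1 α ≠ 0 →
      (mm1 a + ee 1 ≤ α ∨ mm2 b + ee 1 ≤ α) ∧ α 0 + α 1 + α 2 = j := by
    intro α hne
    have h := cfact mf1 hf1 (ee 1) α hne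
    refine ⟨h.1, ?_⟩
    have h2 := h.2
    simp +decide only [ee_apply, reduceIte] at h2
    omega
  have HV2 : ∀ α, c2 α ≠ 0 →
      (mm1 a + ee 2 ≤ α ∨ mm2 b + ee 2 ≤ α) ∧ α 0 + α 1 + α 2 = j := by
    intro α hne
    have h := cfact mf2 hf2 (ee 2) α hne
    refine ⟨h.1, ?_⟩
    have h2 := h.2
    simp +decide only [ee_apply, reduceIte] at h2
    omega
  have key : ∀ α, ∃ d01 d02 d12 : K,
      c0 α = -(d01 + d02) ∧ c1 α = d01 - d12 ∧ c2 α = d02 + d12 ∧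
      (d01 ≠ 0 → (mm1 a + (ee 0 + ee 1) ≤ α ∨ mm2 b + (ee 0 + ee 1) ≤ α)
        ∧ α 0 + α 1 + α 2 = j) ∧
      (d02 ≠ 0 → (mm1 a + (ee 0 + ee 2) ≤ α ∨ mm2 b + (ee 0 + ee 2) ≤ α)
        ∧ α 0 + α 1 + α 2 = j) ∧
      (d12 ≠ 0 → (mm1 a + (ee 1 + ee 2) ≤ α ∨ mm2 b + (ee 1 + ee 2) ≤ α)
        ∧ α 0 + α 1 + α 2 = j) := by
    intro α
    have hsum := Hsum α
    by_cases hz0 : c0 α = 0 <;> by_cases hz1 : c1 α = 0 <;> by_cases hz2 : c2 α = 0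
    · exact ⟨0, 0, 0, by rw [hz0]; ring, by rw [hz1]; ring, by rw [hz2]; ring,
        fun h => absurd rfl h, fun h => absurd rfl h, fun h => absurd rfl h⟩
    · exact absurd (by linear_combination hsum - hz0 - hz1) hz2
    · exact absurd (by linear_combination hsum - hz0 - hz2) hz1
    · have hv1 := HV1 α hz1
      have hv2 := HV2 α hz2
      rcases conn12 ha hb hj hv1.2 hv1.1 hv2.1 with hE | ⟨hE01, hE02⟩
      · exact ⟨0, 0, c2 α, by rw [hz0]; ring, by linear_combination hsum - hz0, by ring,
          fun h => absurd rfl h, fun h => absurd rfl h, fun _ => ⟨hE, hv1.2⟩⟩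
      · exact ⟨c1 α, -(c1 α), 0, by rw [hz0]; ring, by ring, by linear_combination hsum - hz0,
          fun _ => ⟨hE01, hv1.2⟩, fun _ => ⟨hE02, hv1.2⟩, fun h => absurd rfl h⟩
    · exact absurd (by linear_combination hsum - hz1 - hz2) hz0
    · have hv0 := HV0 α hz0
      have hv2 := HV2 α hz2
      rcases conn02 ha hb hj hv0.2 hv0.1 hv2.1 with hE | ⟨hE01, hE12⟩
      · exact ⟨0, -(c0 α), 0, by ring, by rw [hz1]; ring, by linear_combination hsum - hz1,
          fun h => absurd rfl h, fun _ => ⟨hE, hv0.2⟩, fun h => absurd rfl h⟩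
      · exact ⟨-(c0 α), 0, -(c0 α), by ring, by rw [hz1]; ring,
          by linear_combination hsum - hz1,
          fun _ => ⟨hE01, hv0.2⟩, fun h => absurd rfl h, fun _ => ⟨hE12, hv0.2⟩⟩
    · have hv0 := HV0 α hz0
      have hv1 := HV1 α hz1
      have hE01 := conn01 ha hb hv0.1 hv1.1
      exact ⟨-(c0 α), 0, 0, by ring, by linear_combination hsum - hz2, by rw [hz2]; ring,
        fun _ => ⟨hE01, hv0.2⟩, fun h => absurd rfl h, fun h => absurd rfl h⟩
    · have hv0 := HV0 α hz0
      have hv1 := HV1 α hz1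
      have hv2 := HV2 α hz2
      have hE01 := conn01 ha hb hv0.1 hv1.1
      rcases conn12 ha hb hj hv1.2 hv1.1 hv2.1 with hE12 | ⟨hE01', hE02⟩
      · exact ⟨-(c0 α), 0, c2 α, by ring, by linear_combination hsum, by ring,
          fun _ => ⟨hE01, hv0.2⟩, fun h => absurd rfl h, fun _ => ⟨hE12, hv1.2⟩⟩
      · exact ⟨c1 α, c2 α, 0, by linear_combination hsum, by ring, by ring,
          fun _ => ⟨hE01, hv0.2⟩, fun _ => ⟨hE02, hv1.2⟩, fun h => absurd rfl h⟩
  choose d01 d02 d12 hk using key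
  set A : Finset (Fin 3 →₀ ℕ) :=
    f0.support.image (· + ee 0) ∪ f1.support.image (· + ee 1) ∪
      f2.support.image (· + ee 2) with hA
  have hA0 : ∀ β ∈ f0.support, β + ee 0 ∈ A := by
    intro β hβ
    exact Finset.mem_union_left _ (Finset.mem_union_left _
      (Finset.mem_image.mpr ⟨β, hβ, rfl⟩))
  have hA1 : ∀ β ∈ f1.support, β + ee 1 ∈ A := by
    intro β hβ
    exact Finset.mem_union_left _ (Finset.mem_union_right _
      (Finset.mem_image.mpr ⟨β, hβ, rfl⟩))
  have hA2 : ∀ β ∈ f2.support, β + ee 2 ∈ A := by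
    intro β hβ
    exact Finset.mem_union_right _ (Finset.mem_image.mpr ⟨β, hβ, rfl⟩)
  refine ⟨∑ α ∈ A, monomial (α - (ee 0 + ee 1)) (d01 α),
          ∑ α ∈ A, monomial (α - (ee 0 + ee 2)) (d02 α),
          ∑ α ∈ A, monomial (α - (ee 1 + ee 2)) (d12 α), ⟨?_, ?_⟩, ⟨?_, ?_⟩, ⟨?_, ?_⟩,
          ?_, ?_, ?_⟩
  · apply Ideal.sum_mem
    intro α _
    by_cases hne : d01 α = 0
    · rw [hne, map_zero]; exact Ideal.zero_mem _
    · have hE := ((hk α).2.2.2.1 hne).1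
      have hle : ee 0 + ee 1 ≤ α := by
        rcases hE with h | h <;> exact le_trans le_add_self h
      apply monomial_mem_Idl
      rcases hE with h | h
      · exact Or.inl ((le_tsub_iff_right hle).mpr h)
      · exact Or.inr ((le_tsub_iff_right hle).mpr h)
  · apply Submodule.sum_mem
    intro α _
    by_cases hne : d01 α = 0
    · rw [hne, map_zero]; exact Submodule.zero_mem _
    · obtain ⟨hE, hdeg⟩ := (hk α).2.2.2.1 hne
      have hle : ee 0 + ee 1 ≤ α := by
        rcases hE with h | h <;> exact le_trans le_add_self h
      apply homog_monomial
      have hle3 := le3.mp hle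
      simp only [Finsupp.tsub_apply]
      simp +decide only [Finsupp.add_apply, ee_apply, reduceIte] at hle3 ⊢
      omega
  · apply Ideal.sum_mem
    intro α _
    by_cases hne : d02 α = 0
    · rw [hne, map_zero]; exact Ideal.zero_mem _
    · have hE := ((hk α).2.2.2.2.1 hne).1
      have hle : ee 0 + ee 2 ≤ α := by
        rcases hE with h | h <;> exact le_trans le_add_self h
      apply monomial_mem_Idl
      rcases hE with h | h
      · exact Or.inl ((le_tsub_iff_right hle).mpr h)
      · exact Or.inr ((le_tsub_iff_right hle).mpr h)
  · apply Submodule.sum_mem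
    intro α _
    by_cases hne : d02 α = 0
    · rw [hne, map_zero]; exact Submodule.zero_mem _
    · obtain ⟨hE, hdeg⟩ := (hk α).2.2.2.2.1 hne
      have hle : ee 0 + ee 2 ≤ α := by
        rcases hE with h | h <;> exact le_trans le_add_self h
      apply homog_monomial
      have hle3 := le3.mp hle
      simp only [Finsupp.tsub_apply]
      simp +decide only [Finsupp.add_apply, ee_apply, reduceIte] at hle3 ⊢
      omega
  · apply Ideal.sum_mem
    intro α _
    by_cases hne : d12 α = 0
    · rw [hne, map_zero]; exact Ideal.zero_mem _
    · have hE := ((hk α).2.2.2.2.2 hne).1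
      have hle : ee 1 + ee 2 ≤ α := by
        rcases hE with h | h <;> exact le_trans le_add_self h
      apply monomial_mem_Idl
      rcases hE with h | h
      · exact Or.inl ((le_tsub_iff_right hle).mpr h)
      · exact Or.inr ((le_tsub_iff_right hle).mpr h)
  · apply Submodule.sum_mem
    intro α _
    by_cases hne : d12 α = 0
    · rw [hne, map_zero]; exact Submodule.zero_mem _
    · obtain ⟨hE, hdeg⟩ := (hk α).2.2.2.2.2 hne
      have hle : ee 1 + ee 2 ≤ α := by
        rcases hE with h | h <;> exact le_trans le_add_self h
      apply homog_monomial
      have hle3 := le3.mp hle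
      simp only [Finsupp.tsub_apply]
      simp +decide only [Finsupp.add_apply, ee_apply, reduceIte] at hle3 ⊢
      omega
  · -- EQ0
    rw [Finset.mul_sum, Finset.mul_sum, ← Finset.sum_neg_distrib, ← Finset.sum_neg_distrib,
      ← Finset.sum_add_distrib]
    have step : ∀ α ∈ A,
        -(X 1 * (monomial (α - (ee 0 + ee 1)) (d01 α) : PolyR K 3)) +
          -(X 2 * monomial (α - (ee 0 + ee 2)) (d02 α))
        = monomial (α - ee 0) (c0 α) := by
      intro α _
      have T1 : X 1 * (monomial (α - (ee 0 + ee 1)) (d01 α) : PolyR K 3)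
          = monomial (α - ee 0) (d01 α) :=
        Xmul_term _ (fun h => by
          rcases ((hk α).2.2.2.1 h).1 with hh | hh <;> exact le_trans le_add_self hh)
      have T2 : X 2 * (monomial (α - (ee 0 + ee 2)) (d02 α) : PolyR K 3)
          = monomial (α - ee 0) (d02 α) :=
        Xmul_term _ (fun h => by
          rcases ((hk α).2.2.2.2.1 h).1 with hh | hh <;> exact le_trans le_add_self hh)
      rw [T1, T2, (hk α).1, neg_add, map_add, map_neg, map_neg]
    rw [Finset.sum_congr rfl step]
    simp only [hc0]
    exact sum_mon_eq f0 (ee 0) A hA0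
  · -- EQ1
    rw [Finset.mul_sum, Finset.mul_sum, ← Finset.sum_neg_distrib, ← Finset.sum_add_distrib]
    have step : ∀ α ∈ A,
        X 0 * (monomial (α - (ee 0 + ee 1)) (d01 α) : PolyR K 3) +
          -(X 2 * monomial (α - (ee 1 + ee 2)) (d12 α))
        = monomial (α - ee 1) (c1 α) := by
      intro α _
      have T1 : X 0 * (monomial (α - (ee 0 + ee 1)) (d01 α) : PolyR K 3)
          = monomial (α - ee 1) (d01 α) := by
        rw [add_comm (ee 0) (ee 1)]
        exact Xmul_term _ (fun h => by
          rcases ((hk α).2.2.2.1 h).1 with hh | hh <;>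
            · rw [add_comm (ee 1) (ee 0)]; exact le_trans le_add_self hh)
      have T2 : X 2 * (monomial (α - (ee 1 + ee 2)) (d12 α) : PolyR K 3)
          = monomial (α - ee 1) (d12 α) :=
        Xmul_term _ (fun h => by
          rcases ((hk α).2.2.2.2.2 h).1 with hh | hh <;> exact le_trans le_add_self hh)
      rw [T1, T2, (hk α).2.1, sub_eq_add_neg, map_add, map_neg]
    rw [Finset.sum_congr rfl step]
    simp only [hc1]
    exact sum_mon_eq f1 (ee 1) A hA1
  · -- EQ2
    rw [Finset.mul_sum, Finset.mul_sum, ← Finset.sum_add_distrib]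
    have step : ∀ α ∈ A,
        X 0 * (monomial (α - (ee 0 + ee 2)) (d02 α) : PolyR K 3) +
          X 1 * monomial (α - (ee 1 + ee 2)) (d12 α)
        = monomial (α - ee 2) (c2 α) := by
      intro α _
      have T1 : X 0 * (monomial (α - (ee 0 + ee 2)) (d02 α) : PolyR K 3)
          = monomial (α - ee 2) (d02 α) := by
        rw [add_comm (ee 0) (ee 2)]
        exact Xmul_term _ (fun h => by
          rcases ((hk α).2.2.2.2.1 h).1 with hh | hh <;>
            · rw [add_comm (ee 2) (ee 0)]; exact le_trans le_add_self hh)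
      have T2 : X 1 * (monomial (α - (ee 1 + ee 2)) (d12 α) : PolyR K 3)
          = monomial (α - ee 2) (d12 α) := by
        rw [add_comm (ee 1) (ee 2)]
        exact Xmul_term _ (fun h => by
          rcases ((hk α).2.2.2.2.2 h).1 with hh | hh <;>
            · rw [add_comm (ee 2) (ee 1)]; exact le_trans le_add_self hh)
      rw [T1, T2, (hk α).2.2.1, map_add]
    rw [Finset.sum_congr rfl step]
    simp only [hc2]
    exact sum_mon_eq f2 (ee 2) A hA2

lemma betti1 {a b : ℕ} (ha : 2 ≤ a) (hb : 2 ≤ b) {j : ℕ} (hj : a + b + 2 ≤ j) :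
    bettiNum K 3 (Idl K a b) 1 j = 0 := by
  apply betti_eq_zero_of_le
  rintro f ⟨hfk, hker⟩
  have h1j : 1 ≤ j := by omega
  have h2j : 2 ≤ j := by omega
  have hfe := kosC1_eq h1j hfk
  have hm := (mem_kosC_iff h1j).mp hfk
  obtain ⟨m0, h0⟩ := (hm {0}).1 (by decide)
  obtain ⟨m1, h1⟩ := (hm {1}).1 (by decide)
  obtain ⟨m2, h2⟩ := (hm {2}).1 (by decide)
  have h0' : kDiff K 3 f = 0 := hker
  rw [hfe, kDiff_W1] at h0'
  have E : X 0 * f {0} + (X 1 * f {1} + X 2 * f {2}) = 0 := by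
    have := congrFun h0' ∅
    simpa +decide [W0] using this
  obtain ⟨q01, q02, q12, ⟨m01, h01⟩, ⟨m02, h02⟩, ⟨m12, h12⟩, E0, E1, E2⟩ :=
    solve1 ha hb hj m0 h0 m1 h1 m2 h2 E
  refine ⟨W2 q01 q02 q12, W2_mem_kosC h2j m01 h01 m02 h02 m12 h12, ?_⟩
  rw [kDiff_W2, E0, E1, E2]
  exact hfe.symm

/-- the finite set of exponents of total degree bound -/
def monSet (d : ℕ) : Finset (Fin 3 →₀ ℕ) :=
  ((Finset.range (d+1)) ×ˢ (Finset.range (d+1)) ×ˢ (Finset.range (d+1))).image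
    (fun t => Finsupp.single 0 t.1 + Finsupp.single 1 t.2.1 + Finsupp.single 2 t.2.2)

lemma homog_le_span (d : ℕ) :
    homogeneousSubmodule (Fin 3) K d ≤
      Submodule.span K ((fun β => (monomial β (1:K) : PolyR K 3)) '' (monSet d : Set _)) := by
  intro p hp
  have hq : ∑ β ∈ p.support, coeff β p • (monomial β (1:K) : PolyR K 3) = p := by
    rw [Finset.sum_congr rfl (fun β _ => by rw [smul_monomial, smul_eq_mul, mul_one])]
    exact (as_sum p).symm
  rw [← hq]
  apply Submodule.sum_mem
  intro β hβ
  apply Submodule.smul_mem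
  apply Submodule.subset_span
  refine ⟨β, ?_, rfl⟩
  have hd := mem_homog_iff.mp hp β (MvPolynomial.mem_support_iff.mp hβ)
  rw [monSet]
  simp only [Finset.coe_image, Set.mem_image, Finset.mem_coe, Finset.mem_product,
    Finset.mem_range]
  exact ⟨(β 0, β 1, β 2), ⟨by simp; omega, by simp; omega, by simp; omega⟩, (decompose3 β).symm⟩

lemma fd_kosC (I : Ideal (PolyR K 3)) (i j : ℕ) : FiniteDimensional K ↥(kosC K 3 I i j) := by
  by_cases hij : i ≤ j
  · set G : Set (Finset (Fin 3) → PolyR K 3) :=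
      ⋃ T : Finset (Fin 3),
        (fun q => Pi.single T q) '' ((fun β => (monomial β (1:K) : PolyR K 3)) ''
          (monSet (j-i) : Set _)) with hG
    have hGfin : G.Finite :=
      Set.finite_iUnion (fun T => (((monSet (j-i)).finite_toSet.image _).image _))
    have hle : kosC K 3 I i j ≤ Submodule.span K G := by
      intro f hf
      rw [← Finset.univ_sum_single f]
      apply Submodule.sum_mem
      intro T _
      by_cases hc : T.card = i
      · have hfT := (((mem_kosC_iff hij).mp hf T).1 hc).2
        have h1 : f T ∈ Submodule.span K
            ((fun β => (monomial β (1:K) : PolyR K 3)) '' (monSet (j-i) : Set _)) :=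
          homog_le_span _ hfT
        have h2 := Submodule.apply_mem_span_image_of_mem_span
          (LinearMap.single K (fun _ : Finset (Fin 3) => PolyR K 3) T) h1
        refine Submodule.span_mono ?_ h2
        rintro x ⟨y, hy, rfl⟩
        exact Set.mem_iUnion.mpr ⟨T, ⟨y, hy, rfl⟩⟩
      · rw [((mem_kosC_iff hij).mp hf T).2 hc, Pi.single_zero]
        exact Submodule.zero_mem _
    haveI := FiniteDimensional.span_of_finite K hGfin
    exact Submodule.finiteDimensional_of_le hle
  · rw [kosC_bot hij]
    infer_instance

lemma W0_zero : W0 (0 : PolyR K 3) = 0 := by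
  funext T; simp [W0]

lemma betti1_ne {a b : ℕ} (ha : 2 ≤ a) (hb : 2 ≤ b) :
    bettiNum K 3 (Idl K a b) 1 (a+b+1) ≠ 0 := by
  set δ : Fin 3 →₀ ℕ := Finsupp.single 1 (a-1) + Finsupp.single 2 b with hδ
  set β0 : Fin 3 →₀ ℕ := Finsupp.single 1 a + Finsupp.single 2 b with hβ0
  set β2 : Fin 3 →₀ ℕ :=
    Finsupp.single 0 1 + (Finsupp.single 1 a + Finsupp.single 2 (b-1)) with hβ2
  have hβ0δ : β0 = δ + ee 1 := by
    ext i; fin_cases i <;>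
      simp +decide [hδ, hβ0, Finsupp.single_apply] <;> try omega
  set z := W1 (monomial β0 (1:K)) 0 (monomial β2 (-1:K)) with hzdef
  set Z := kosC K 3 (Idl K a b) 1 (a+b+1) ⊓ LinearMap.ker (kDiff K 3) with hZ
  have hzZ : z ∈ Z := by
    refine Submodule.mem_inf.mpr ⟨?_, ?_⟩
    · apply W1_mem_kosC (by omega)
      · apply monomial_mem_Idl
        refine Or.inr ?_
        rw [le3]
        simp +decide [hβ0, Finsupp.single_apply]
        try omega
      · apply homog_monomial
        simp +decide [hβ0, Finsupp.single_apply]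
        try omega
      · exact Ideal.zero_mem _
      · exact Submodule.zero_mem _
      · apply monomial_mem_Idl
        refine Or.inl ?_
        rw [le3]
        simp +decide [hβ2, Finsupp.single_apply]
      · apply homog_monomial
        simp +decide [hβ2, Finsupp.single_apply]
        try omega
    · show kDiff K 3 z = 0
      rw [hzdef, kDiff_W1]
      have hexp : Finsupp.single 0 1 + β0 = Finsupp.single 2 1 + β2 := by
        ext i; fin_cases i <;>
          simp +decide [hβ0, hβ2, Finsupp.single_apply] <;> try omega
      have hinner : X 0 * (monomial β0 (1:K) : PolyR K 3) +
          (X 1 * 0 + X 2 * monomial β2 (-1:K)) = 0 := by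
        rw [mul_zero, zero_add, X, X, monomial_mul, monomial_mul, one_mul, one_mul,
          hexp, ← map_add]
        norm_num
      rw [hinner, W0_zero]
  have hznB : z ∉ Submodule.map (kDiff K 3) (kosC K 3 (Idl K a b) 2 (a+b+1)) := by
    rintro ⟨g, hg, hEq⟩
    have h2j : (2:ℕ) ≤ a+b+1 := by omega
    have hge := kosC2_eq h2j hg
    have hmg := (mem_kosC_iff h2j).mp hg
    obtain ⟨m01, -⟩ := (hmg {0,1}).1 (by decide)
    obtain ⟨m02, -⟩ := (hmg {0,2}).1 (by decide)
    obtain ⟨m12, -⟩ := (hmg {1,2}).1 (by decide)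
    rw [hge, kDiff_W2, hzdef] at hEq
    have E0' : -(X 1 * g {0,1}) + -(X 2 * g {0,2}) = monomial β0 (1:K) := by
      have := congrFun hEq {0}
      simpa +decide [W1] using this
    have E1' : X 0 * g {0,1} + -(X 2 * g {1,2}) = 0 := by
      have := congrFun hEq {1}
      simpa +decide [W1] using this
    -- coefficient of δ + ee 0 in E1'
    have hg01δ : coeff δ (g {0,1}) = 0 := by
      have h := congrArg (coeff (δ + ee 0)) E1'
      rw [coeff_add, coeff_neg, coeff_X_mul3, coeff_X_mul3, coeff_zero] at h
      rw [if_pos (le_add_self : ee 0 ≤ δ + ee 0), add_tsub_cancel_right] at h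
      have hee2 : ee 2 ≤ δ + ee 0 := by
        rw [le3]; simp +decide [hδ, Finsupp.single_apply]; try omega
      rw [if_pos hee2] at h
      have hrep : δ + ee 0 = (Finsupp.single 0 1 +
          (Finsupp.single 1 (a-1) + Finsupp.single 2 (b-1))) + ee 2 := by
        ext i; fin_cases i <;>
          simp +decide [hδ, Finsupp.single_apply] <;> try omega
      rw [hrep, add_tsub_cancel_right] at h
      rw [coeff_eq_zero m12 ?n1 ?n2] at h
      case n1 =>
        rw [le3]; simp +decide [Finsupp.single_apply]; try omega
      case n2 =>
        rw [le3]; simp +decide [Finsupp.single_apply]; try omega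
      simpa using h
    -- coefficient of β0 in E0'
    have h2 := congrArg (coeff β0) E0'
    rw [coeff_add, coeff_neg, coeff_neg, coeff_X_mul3, coeff_X_mul3] at h2
    have hee1 : ee 1 ≤ β0 := by
      rw [le3]; simp +decide [hβ0, Finsupp.single_apply]; try omega
    have hee2 : ee 2 ≤ β0 := by
      rw [le3]; simp +decide [hβ0, Finsupp.single_apply]; try omega
    rw [if_pos hee1, if_pos hee2] at h2
    have hr1 : β0 - ee 1 = δ := by rw [hβ0δ, add_tsub_cancel_right]
    have hr2 : β0 - ee 2 = Finsupp.single 1 a + Finsupp.single 2 (b-1) := by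
      have : β0 = (Finsupp.single 1 a + Finsupp.single 2 (b-1)) + ee 2 := by
        ext i; fin_cases i <;>
          simp +decide [hβ0, Finsupp.single_apply] <;> try omega
      rw [this, add_tsub_cancel_right]
    rw [hr1, hr2, hg01δ] at h2
    rw [coeff_eq_zero m02 ?m1 ?m2] at h2
    case m1 =>
      rw [le3]; simp +decide [Finsupp.single_apply]; try omega
    case m2 =>
      rw [le3]; simp +decide [Finsupp.single_apply]; try omega
    rw [coeff_monomial, if_pos rfl] at h2
    simp at h2
  intro hcon
  unfold bettiNum at hcon
  haveI : FiniteDimensional K ↥(kosC K 3 (Idl K a b) 1 (a+b+1)) := fd_kosC _ _ _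
  haveI hZfd : FiniteDimensional K ↥Z := Submodule.finiteDimensional_of_le inf_le_left
  have hBZ : Submodule.map (kDiff K 3) (kosC K 3 (Idl K a b) (1+1) (a+b+1)) ⊓ Z < Z := by
    refine lt_of_le_of_ne inf_le_right (fun he => hznB ?_)
    have hz2 : z ∈ Submodule.map (kDiff K 3) (kosC K 3 (Idl K a b) (1+1) (a+b+1)) ⊓ Z := by
      rw [he]; exact hzZ
    exact hz2.1
  have := Submodule.finrank_lt_finrank_of_lt hBZ
  rw [← hZ] at hcon
  omega

lemma CMreg_eq {a b : ℕ} (ha : 2 ≤ a) (hb : 2 ≤ b) : CMreg K 3 (Idl K a b) = a + b := by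
  unfold CMreg
  apply IsGreatest.csSup_eq
  constructor
  · exact ⟨1, a+b+1, betti1_ne ha hb, by omega⟩
  · rintro d ⟨i, j, hne, rfl⟩
    by_contra hgt
    push_neg at hgt
    apply hne
    match i with
    | 0 => exact betti0 ha hb (by omega)
    | 1 => exact betti1 ha hb (by omega)
    | 2 => exact betti2 ha hb j
    | 3 => exact betti3 _ j
    | (n+4) => exact betti_ge4 _ (by omega)

end S2
end


/-- For the weighted oriented path `D₁` with edges `(x₁,x₂), (x₂,x₃)`,
`w(x₁) = 1`, `w(x₂) > 1`, `w(x₃) > 1`, one has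
`reg I(D₁) = w(x₁) + w(x₂) + w(x₃) - 1 > d₁ + 1` where `d₁ = max w(xᵢ)`. -/
theorem stmt2 {K : Type} [Field K] (w : Fin 3 → ℕ)
    (h1 : w 0 = 1) (h2 : 1 < w 1) (h3 : 1 < w 2) :
    CMreg K 3 (Ideal.span ({X 0 * X 1 ^ w 1, X 1 * X 2 ^ w 2} : Set (PolyR K 3))) =
        w 0 + w 1 + w 2 - 1 ∧
      w 0 + w 1 + w 2 - 1 > max (w 0) (max (w 1) (w 2)) + 1 := by
  have ha : 2 ≤ w 1 := h2
  have hb : 2 ≤ w 2 := h3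
  constructor
  · rw [S2.Idl_eq (w 1) (w 2), S2.CMreg_eq ha hb, h1]
    omega
  · rw [h1]
    omega
end

section
/- Let D_4 be the weighted oriented triangle with vertices x_1, x_2, x_3, directed edges (x_1,x_2), (x_1,x_3), (x_3,x_2), and weights satisfying w(x_1) = 1, w(x_2) > 1, w(x_3) > 1, so that I(D_4) = (x_1 x_2^{w(x_2)}, x_1 x_3^{w(x_3)}, x_3 x_2^{w(x_2)}). Then reg(I(D_4)) = w(x_2) + w(x_3) > d_4 + 1, where d_4 = max{w(x_i) : i = 1,2,3}. -/
open MvPolynomial Module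

noncomputable section Aux
namespace StmtAux

variable {K : Type} [Field K]

def ex (p q r : ℕ) : Fin 3 →₀ ℕ :=
  Finsupp.single 0 p + Finsupp.single 1 q + Finsupp.single 2 r

@[simp] lemma ex_apply_zero (p q r : ℕ) : ex p q r 0 = p := by
  simp [ex, Finsupp.single_apply, show (1:Fin 3) ≠ 0 by decide, show (2:Fin 3) ≠ 0 by decide]

@[simp] lemma ex_apply_one (p q r : ℕ) : ex p q r 1 = q := by
  simp [ex, Finsupp.single_apply, show (0:Fin 3) ≠ 1 by decide, show (2:Fin 3) ≠ 1 by decide]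

@[simp] lemma ex_apply_two (p q r : ℕ) : ex p q r 2 = r := by
  simp [ex, Finsupp.single_apply, show (0:Fin 3) ≠ 2 by decide, show (1:Fin 3) ≠ 2 by decide]

lemma eq_ex (ν : Fin 3 →₀ ℕ) : ν = ex (ν 0) (ν 1) (ν 2) := by
  ext i; fin_cases i <;> simp

lemma ex_add (p q r p' q' r' : ℕ) :
    ex p q r + ex p' q' r' = ex (p + p') (q + q') (r + r') := by
  ext i; fin_cases i <;> simp

lemma ex_tsub (p q r p' q' r' : ℕ) :
    ex p q r - ex p' q' r' = ex (p - p') (q - q') (r - r') := by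
  ext i; fin_cases i <;> simp [Finsupp.tsub_apply]

lemma ex_le_ex {p q r p' q' r' : ℕ} :
    ex p q r ≤ ex p' q' r' ↔ p ≤ p' ∧ q ≤ q' ∧ r ≤ r' := by
  constructor
  · intro h
    exact ⟨by simpa using h 0, by simpa using h 1, by simpa using h 2⟩
  · rintro ⟨h1, h2, h3⟩ i
    fin_cases i <;> simpa

lemma ex_congr {p q r p' q' r' : ℕ} (h1 : p = p') (h2 : q = q') (h3 : r = r') :
    ex p q r = ex p' q' r' := by subst h1; subst h2; subst h3; rfl

lemma deg_ex (p q r : ℕ) : Finsupp.degree (ex p q r) = p + q + r := by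
  have : Finsupp.degree (ex p q r) = ∑ i : Fin 3, ex p q r i :=
    Finset.sum_subset (Finset.subset_univ _)
      (fun i _ h => Finsupp.notMem_support_iff.mp h)
  rw [this, Fin.sum_univ_three]; simp

lemma single_zero_eq_ex (m : ℕ) : Finsupp.single (0 : Fin 3) m = ex m 0 0 := by simp [ex]
lemma single_one_eq_ex (m : ℕ) : Finsupp.single (1 : Fin 3) m = ex 0 m 0 := by simp [ex]
lemma single_two_eq_ex (m : ℕ) : Finsupp.single (2 : Fin 3) m = ex 0 0 m := by simp [ex]

/-! ### The ideal -/

def memI (a b : ℕ) (ν : Fin 3 →₀ ℕ) : Prop :=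
  ex 1 a 0 ≤ ν ∨ ex 1 0 b ≤ ν ∨ ex 0 a 1 ≤ ν

def Id3 (K : Type) [Field K] (a b : ℕ) : Ideal (PolyR K 3) :=
  Ideal.span ((fun s => monomial s (1 : K)) '' {ex 1 a 0, ex 1 0 b, ex 0 a 1})

lemma mem_Id3_iff {a b : ℕ} {p : PolyR K 3} :
    p ∈ Id3 K a b ↔ ∀ ν ∈ p.support, memI a b ν := by
  rw [Id3, mem_ideal_span_monomial_image]
  simp [memI]

lemma memI_ex {a b p q r : ℕ} :
    memI a b (ex p q r) ↔ (1 ≤ p ∧ a ≤ q) ∨ (1 ≤ p ∧ b ≤ r) ∨ (a ≤ q ∧ 1 ≤ r) := by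
  simp [memI, ex_le_ex]

lemma monomial_mem_Id3 {a b : ℕ} {ν : Fin 3 →₀ ℕ} {c : K} (h : memI a b ν) :
    monomial ν c ∈ Id3 K a b := by
  rw [mem_Id3_iff]
  intro ν' hν'
  have := MvPolynomial.support_monomial_subset hν'
  rw [Finset.mem_singleton] at this
  rwa [this]

lemma coeff_memI {a b : ℕ} {p : PolyR K 3} {ν : Fin 3 →₀ ℕ}
    (hp : p ∈ Id3 K a b) (h : coeff ν p ≠ 0) : memI a b ν :=
  mem_Id3_iff.mp hp ν (mem_support_iff.mpr h)

lemma degree_of_coeff {p : PolyR K 3} {m : ℕ} (h : IsHomogeneous p m) {ν : Fin 3 →₀ ℕ}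
    (hc : coeff ν p ≠ 0) : Finsupp.degree ν = m := by
  rw [Finsupp.degree_eq_weight_one]; exact h hc

/-! ### eT -/

def eT (T : Finset (Fin 3)) : Fin 3 →₀ ℕ := ∑ k ∈ T, Finsupp.single k 1

lemma eT_apply (T : Finset (Fin 3)) (i : Fin 3) : eT T i = if i ∈ T then 1 else 0 := by
  rw [eT, Finsupp.finset_sum_apply]
  simp [Finsupp.single_apply]

@[simp] lemma eT_empty : eT (∅ : Finset (Fin 3)) = 0 := by simp [eT]

lemma eT_insert {k : Fin 3} {T : Finset (Fin 3)} (h : k ∉ T) :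
    eT (insert k T) = eT T + Finsupp.single k 1 := by
  rw [eT, Finset.sum_insert h, add_comm, eT]

lemma eT_le_insert (k : Fin 3) (T : Finset (Fin 3)) : eT T ≤ eT (insert k T) := by
  by_cases h : k ∈ T
  · rw [Finset.insert_eq_self.mpr h]
  · rw [eT_insert h]; exact le_add_of_nonneg_right zero_le

lemma eT_0 : eT ({0} : Finset (Fin 3)) = ex 1 0 0 := by
  ext i; fin_cases i <;> simp [eT_apply]
lemma eT_1 : eT ({1} : Finset (Fin 3)) = ex 0 1 0 := by
  ext i; fin_cases i <;> simp [eT_apply]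
lemma eT_2 : eT ({2} : Finset (Fin 3)) = ex 0 0 1 := by
  ext i; fin_cases i <;> simp [eT_apply]
lemma eT_01 : eT ({0,1} : Finset (Fin 3)) = ex 1 1 0 := by
  ext i; fin_cases i <;> simp [eT_apply]
lemma eT_02 : eT ({0,2} : Finset (Fin 3)) = ex 1 0 1 := by
  ext i; fin_cases i <;> simp [eT_apply]
lemma eT_12 : eT ({1,2} : Finset (Fin 3)) = ex 0 1 1 := by
  ext i; fin_cases i <;> simp [eT_apply]
lemma eT_univ : eT (Finset.univ : Finset (Fin 3)) = ex 1 1 1 := by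
  ext i; fin_cases i <;> simp [eT_apply]

end StmtAux
end Aux
/-! ### bas and kDiff computation lemmas -/
noncomputable section Aux2
namespace StmtAux
variable {K : Type} [Field K]

lemma kDiff_apply (f : Finset (Fin 3) → PolyR K 3) (T : Finset (Fin 3)) :
    kDiff K 3 f T = ∑ k ∈ Tᶜ,
      ((-1 : ℤ) ^ (((insert k T).filter (fun j => j < k)).card)) • (X k * f (insert k T)) := rfl

lemma sum_compl_fin3 {M : Type*} [AddCommMonoid M] (T : Finset (Fin 3)) (F : Fin 3 → M) :
    ∑ k ∈ Tᶜ, F k = (if 0 ∈ T then 0 else F 0) + ((if 1 ∈ T then 0 else F 1) +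
      (if 2 ∈ T then 0 else F 2)) := by
  have h : ∑ k ∈ Tᶜ, F k = ∑ k : Fin 3, if k ∈ Tᶜ then F k else 0 := by
    rw [Finset.sum_ite_mem, Finset.univ_inter]
  rw [h, Fin.sum_univ_three]
  simp only [Finset.mem_compl]
  by_cases h0 : (0:Fin 3) ∈ T <;> by_cases h1 : (1:Fin 3) ∈ T <;> by_cases h2 : (2:Fin 3) ∈ T <;>
    simp [h0, h1, h2, add_assoc]

def bas (S : Finset (Fin 3)) (p : PolyR K 3) : Finset (Fin 3) → PolyR K 3 :=
  fun T => if T = S then p else 0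

@[simp] lemma bas_apply_self (S : Finset (Fin 3)) (p : PolyR K 3) : bas S p S = p := if_pos rfl

lemma bas_apply_ne (S T : Finset (Fin 3)) (p : PolyR K 3) (h : T ≠ S) : bas S p T = 0 := if_neg h

@[simp] lemma bas_zero (S : Finset (Fin 3)) : bas S (0 : PolyR K 3) = 0 := by
  funext T; simp [bas]

lemma bas_add (S : Finset (Fin 3)) (p q : PolyR K 3) :
    bas S p + bas S q = bas S (p + q) := by
  funext T; by_cases h : T = S <;> simp [bas, h]

lemma kDiff_bas_0 (p : PolyR K 3) : kDiff K 3 (bas {0} p) = bas ∅ (X 0 * p) := by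
  funext T
  rw [kDiff_apply, sum_compl_fin3]
  fin_cases T <;>
    simp (config := { decide := true }) [bas]
lemma kDiff_bas_1 (p : PolyR K 3) : kDiff K 3 (bas {1} p) = bas ∅ (X 1 * p) := by
  funext T
  rw [kDiff_apply, sum_compl_fin3]
  fin_cases T <;> simp (config := { decide := true }) [bas]

lemma kDiff_bas_2 (p : PolyR K 3) : kDiff K 3 (bas {2} p) = bas ∅ (X 2 * p) := by
  funext T
  rw [kDiff_apply, sum_compl_fin3]
  fin_cases T <;> simp (config := { decide := true }) [bas]

lemma kDiff_bas_01 (p : PolyR K 3) :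
    kDiff K 3 (bas {0,1} p) = bas {0} (-(X 1 * p)) + bas {1} (X 0 * p) := by
  funext T
  rw [kDiff_apply, sum_compl_fin3]
  fin_cases T <;> simp (config := { decide := true }) [bas]

lemma kDiff_bas_02 (p : PolyR K 3) :
    kDiff K 3 (bas {0,2} p) = bas {0} (-(X 2 * p)) + bas {2} (X 0 * p) := by
  funext T
  rw [kDiff_apply, sum_compl_fin3]
  fin_cases T <;> simp (config := { decide := true }) [bas]

lemma kDiff_bas_12 (p : PolyR K 3) :
    kDiff K 3 (bas {1,2} p) = bas {1} (-(X 2 * p)) + bas {2} (X 1 * p) := by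
  funext T
  rw [kDiff_apply, sum_compl_fin3]
  fin_cases T <;> simp (config := { decide := true }) [bas]

lemma kDiff_bas_univ (p : PolyR K 3) :
    kDiff K 3 (bas Finset.univ p) =
      bas {0,1} (X 2 * p) + bas {0,2} (-(X 1 * p)) + bas {1,2} (X 0 * p) := by
  funext T
  rw [kDiff_apply, sum_compl_fin3]
  fin_cases T <;> simp (config := { decide := true }) [bas]
/-! ### kosC membership, Pproj -/

lemma X_mul_monomial' (k : Fin 3) (ν : Fin 3 →₀ ℕ) (c : K) :
    X k * monomial ν c = monomial (ν + Finsupp.single k 1) c := by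
  rw [show (X k : PolyR K 3) = monomial (Finsupp.single k 1) 1 from rfl, monomial_mul, one_mul,
    add_comm]

lemma mem_kosC_iff {I : Ideal (PolyR K 3)} {i j : ℕ} (hij : i ≤ j)
    {f : Finset (Fin 3) → PolyR K 3} :
    f ∈ kosC K 3 I i j ↔ ∀ S : Finset (Fin 3),
      (S.card = i → f S ∈ I ∧ (f S).IsHomogeneous (j - i)) ∧ (S.card ≠ i → f S = 0) := by
  rw [kosC, if_pos hij]
  simp only [Submodule.mem_iInf, Submodule.mem_comap, LinearMap.proj_apply]
  refine forall_congr' fun S => ?_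
  by_cases h : S.card = i
  · simp [h, Submodule.mem_inf, mem_homogeneousSubmodule]
  · simp [h, Submodule.mem_bot]

lemma kosC_eq_bot_of_not_le {I : Ideal (PolyR K 3)} {i j : ℕ} (hij : ¬ i ≤ j) :
    kosC K 3 I i j = ⊥ := by rw [kosC, if_neg hij]

lemma eq_zero_of_mem_kosC_big {I : Ideal (PolyR K 3)} {i j : ℕ} (hi : 4 ≤ i)
    {f : Finset (Fin 3) → PolyR K 3} (hf : f ∈ kosC K 3 I i j) : f = 0 := by
  by_cases hij : i ≤ j
  · rw [mem_kosC_iff hij] at hf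
    funext T
    refine (hf T).2 (fun h => ?_)
    have := T.card_le_card (Finset.subset_univ T)
    simp only [Finset.card_univ, Fintype.card_fin] at this
    omega
  · rw [kosC_eq_bot_of_not_le hij] at hf
    simpa using hf

def Pproj (μ : Fin 3 →₀ ℕ) : (Finset (Fin 3) → PolyR K 3) →ₗ[K] (Finset (Fin 3) → PolyR K 3) where
  toFun f T := if eT T ≤ μ then monomial (μ - eT T) (coeff (μ - eT T) (f T)) else 0
  map_add' f g := by
    funext T
    by_cases h : eT T ≤ μ <;> simp [h, Pi.add_apply, coeff_add]
  map_smul' c f := by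
    funext T
    by_cases h : eT T ≤ μ <;> simp [h, Pi.smul_apply, coeff_smul, MvPolynomial.smul_monomial]

lemma Pproj_apply (μ : Fin 3 →₀ ℕ) (f : Finset (Fin 3) → PolyR K 3) (T : Finset (Fin 3)) :
    Pproj (K := K) μ f T =
      if eT T ≤ μ then monomial (μ - eT T) (coeff (μ - eT T) (f T)) else 0 := rfl

lemma Pproj_apply_eq (μ : Fin 3 →₀ ℕ) (f : Finset (Fin 3) → PolyR K 3) (T : Finset (Fin 3)) :
    Pproj (K := K) μ f T = monomial (μ - eT T)
      (if eT T ≤ μ then coeff (μ - eT T) (f T) else 0) := by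
  rw [Pproj_apply]
  split
  · rfl
  · rw [map_zero]
lemma kDiff_Pproj (μ : Fin 3 →₀ ℕ) (f : Finset (Fin 3) → PolyR K 3) :
    kDiff K 3 (Pproj μ f) = Pproj μ (kDiff K 3 f) := by
  funext T
  rw [Pproj_apply]
  by_cases hT : eT T ≤ μ
  · rw [if_pos hT, kDiff_apply, kDiff_apply, MvPolynomial.coeff_sum, map_sum]
    refine Finset.sum_congr rfl fun k hk => ?_
    rw [Finset.mem_compl] at hk
    rw [MvPolynomial.coeff_smul, map_zsmul]
    congr 1
    rw [Pproj_apply, eT_insert hk, MvPolynomial.coeff_X_mul' (μ - eT T) k]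
    by_cases hk2 : Finsupp.single k 1 ≤ μ - eT T
    · have hins : eT T + Finsupp.single k 1 ≤ μ := by
        rwa [le_tsub_iff_left hT] at hk2
      have hexp : μ - (eT T + Finsupp.single k 1) + Finsupp.single k 1 = μ - eT T := by
        rw [← tsub_tsub]
        exact tsub_add_cancel_of_le hk2
      have hsup : k ∈ (μ - eT T).support := by
        rw [Finsupp.mem_support_iff]
        have : 1 ≤ (μ - eT T) k := Finsupp.single_le_iff.mp hk2
        omega
      rw [if_pos hins, if_pos hsup, X_mul_monomial', hexp, tsub_tsub]
    · have hins : ¬ eT T + Finsupp.single k 1 ≤ μ :=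
        fun h => hk2 ((le_tsub_iff_left hT).mpr h)
      have hsup : k ∉ (μ - eT T).support := by
        rw [Finsupp.mem_support_iff]
        intro h
        exact hk2 (Finsupp.single_le_iff.mpr (by omega))
      rw [if_neg hins, mul_zero, if_neg hsup, map_zero]
  · rw [if_neg hT, kDiff_apply]
    refine Finset.sum_eq_zero fun k hk => ?_
    rw [Finset.mem_compl] at hk
    rw [Pproj_apply, if_neg, mul_zero, smul_zero]
    intro h
    exact hT (le_trans (eT_le_insert k T) h)

lemma decomp (f : Finset (Fin 3) → PolyR K 3) :
    f = ∑ μ ∈ Finset.univ.biUnion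
        (fun T : Finset (Fin 3) => (f T).support.image (· + eT T)), Pproj (K := K) μ f := by
  funext T
  rw [Finset.sum_apply]
  set M := Finset.univ.biUnion
      (fun T : Finset (Fin 3) => (f T).support.image (· + eT T)) with hM
  have hsub : (f T).support.image (· + eT T) ⊆ M :=
    fun μ hμ => Finset.mem_biUnion.mpr ⟨T, Finset.mem_univ T, hμ⟩
  rw [← Finset.sum_subset hsub ?_]
  · rw [Finset.sum_image (fun x _ y _ h => by simpa using h)]
    conv_lhs => rw [← (f T).support_sum_monomial_coeff]
    refine Finset.sum_congr rfl fun ν hν => ?_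
    rw [Pproj_apply, if_pos le_add_self, add_tsub_cancel_right]
  · intro μ hμM hμs
    rw [Pproj_apply]
    split
    · rename_i h
      have hc : coeff (μ - eT T) (f T) = 0 := by
        by_contra hc
        exact hμs (Finset.mem_image.mpr ⟨μ - eT T, MvPolynomial.mem_support_iff.mpr hc,
          tsub_add_cancel_of_le h⟩)
      rw [hc, map_zero]
    · rfl
lemma Pproj_mem_kosC {a b i j : ℕ} (hij : i ≤ j) {f : Finset (Fin 3) → PolyR K 3}
    (hf : f ∈ kosC K 3 (Id3 K a b) i j) (μ : Fin 3 →₀ ℕ) :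
    Pproj μ f ∈ kosC K 3 (Id3 K a b) i j := by
  rw [mem_kosC_iff hij] at hf ⊢
  intro S
  constructor
  · intro hS
    obtain ⟨hI, hH⟩ := (hf S).1 hS
    rw [Pproj_apply]
    split
    · by_cases hc : coeff (μ - eT S) (f S) = 0
      · rw [hc, map_zero]
        exact ⟨Ideal.zero_mem _, isHomogeneous_zero _ _ _⟩
      · exact ⟨monomial_mem_Id3 (coeff_memI hI hc),
          isHomogeneous_monomial _ (degree_of_coeff hH hc)⟩
    · exact ⟨Ideal.zero_mem _, isHomogeneous_zero _ _ _⟩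
  · intro hS
    rw [Pproj_apply, (hf S).2 hS]
    split <;> simp
lemma bas_mem_kosC {a b i j : ℕ} (hij : i ≤ j) {S : Finset (Fin 3)} (hS : S.card = i)
    {ν : Fin 3 →₀ ℕ} {c : K} (h : c ≠ 0 → memI a b ν ∧ Finsupp.degree ν = j - i) :
    bas S (monomial ν c) ∈ kosC K 3 (Id3 K a b) i j := by
  rw [mem_kosC_iff hij]
  intro T
  constructor
  · intro hT
    by_cases hTS : T = S
    · subst hTS
      rw [bas_apply_self]
      by_cases hc : c = 0
      · rw [hc, map_zero]
        exact ⟨Ideal.zero_mem _, isHomogeneous_zero _ _ _⟩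
      · exact ⟨monomial_mem_Id3 (h hc).1, isHomogeneous_monomial _ (h hc).2⟩
    · rw [bas_apply_ne _ _ _ hTS]
      exact ⟨Ideal.zero_mem _, isHomogeneous_zero _ _ _⟩
  · intro hT
    refine bas_apply_ne _ _ _ fun hTS => hT (hTS ▸ hS)

lemma shape0 {I : Ideal (PolyR K 3)} {j : ℕ} {f : Finset (Fin 3) → PolyR K 3}
    (hj : 0 ≤ j) (hf : f ∈ kosC K 3 I 0 j) : f = bas ∅ (f ∅) := by
  rw [mem_kosC_iff hj] at hf
  funext T
  by_cases hT : T = ∅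
  · subst hT; rw [bas_apply_self]
  · rw [bas_apply_ne _ _ _ hT]
    exact (hf T).2 (by simpa [Finset.card_eq_zero] using hT)

lemma shape1 {I : Ideal (PolyR K 3)} {j : ℕ} {f : Finset (Fin 3) → PolyR K 3}
    (hj : 1 ≤ j) (hf : f ∈ kosC K 3 I 1 j) :
    f = bas {0} (f {0}) + bas {1} (f {1}) + bas {2} (f {2}) := by
  rw [mem_kosC_iff hj] at hf
  funext T
  have h := (hf T).2
  fin_cases T <;>
    simp (config := { decide := true }) [bas] <;>
    first | exact h (by decide) | exact congrArg f (by decide)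

lemma shape2 {I : Ideal (PolyR K 3)} {j : ℕ} {f : Finset (Fin 3) → PolyR K 3}
    (hj : 2 ≤ j) (hf : f ∈ kosC K 3 I 2 j) :
    f = bas {0,1} (f {0,1}) + bas {0,2} (f {0,2}) + bas {1,2} (f {1,2}) := by
  rw [mem_kosC_iff hj] at hf
  funext T
  have h := (hf T).2
  fin_cases T <;>
    simp (config := { decide := true }) [bas] <;>
    first | exact h (by decide) | exact congrArg f (by decide)

lemma shape3 {I : Ideal (PolyR K 3)} {j : ℕ} {f : Finset (Fin 3) → PolyR K 3}
    (hj : 3 ≤ j) (hf : f ∈ kosC K 3 I 3 j) : f = bas Finset.univ (f Finset.univ) := by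
  rw [mem_kosC_iff hj] at hf
  funext T
  have h := (hf T).2
  fin_cases T <;>
    simp (config := { decide := true }) [bas] <;>
    first | exact h (by decide) | exact congrArg f (by decide)
/-! ### arithmetic core -/

lemma deg_tsub {μ ν : Fin 3 →₀ ℕ} (h : ν ≤ μ) :
    Finsupp.degree (μ - ν) = Finsupp.degree μ - Finsupp.degree ν := by
  obtain ⟨p, q, r, rfl⟩ : ∃ p q r, μ = ex p q r := ⟨_, _, _, eq_ex μ⟩
  obtain ⟨p', q', r', rfl⟩ : ∃ p q r, ν = ex p q r := ⟨_, _, _, eq_ex ν⟩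
  rw [ex_le_ex] at h
  rw [ex_tsub, deg_ex, deg_ex, deg_ex]
  omega

lemma strip {a b : ℕ} (ha : 1 ≤ a) (hb : 1 ≤ b) {μ : Fin 3 →₀ ℕ} (h : memI a b μ)
    (hd : a + b + 1 ≤ Finsupp.degree μ) :
    ∃ k : Fin 3, Finsupp.single k 1 ≤ μ ∧ memI a b (μ - Finsupp.single k 1) := by
  obtain ⟨p, q, r, rfl⟩ : ∃ p q r, μ = ex p q r := ⟨_, _, _, eq_ex μ⟩
  rw [memI_ex] at h
  rw [deg_ex] at hd
  by_cases h0 : (2 ≤ p ∧ ((1 ≤ p-1 ∧ a ≤ q) ∨ (1 ≤ p-1 ∧ b ≤ r) ∨ (a ≤ q ∧ 1 ≤ r)))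
  · exact ⟨0, by simp only [single_zero_eq_ex, ex_le_ex]; omega,
      by simp only [single_zero_eq_ex, ex_tsub, memI_ex]; omega⟩
  by_cases h1 : (1 ≤ q ∧ ((1 ≤ p ∧ a ≤ q-1) ∨ (1 ≤ p ∧ b ≤ r) ∨ (a ≤ q-1 ∧ 1 ≤ r)))
  · exact ⟨1, by simp only [single_one_eq_ex, ex_le_ex]; omega,
      by simp only [single_one_eq_ex, ex_tsub, memI_ex]; omega⟩
  · exact ⟨2, by simp only [single_two_eq_ex, ex_le_ex]; omega,
      by simp only [single_two_eq_ex, ex_tsub, memI_ex]; omega⟩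

lemma pairArith01 {a b : ℕ} (ha : 1 ≤ a) (hb : 1 ≤ b) {p q r : ℕ} (h0 : 1 ≤ p) (h1 : 1 ≤ q)
    (m0 : memI a b (ex (p-1) q r)) (m1 : memI a b (ex p (q-1) r)) (hd : a+b+2 ≤ p+q+r) :
    memI a b (ex (p-1) (q-1) r) ∨
      (1 ≤ r ∧ memI a b (ex (p-1) q (r-1)) ∧ memI a b (ex p (q-1) (r-1))) := by
  simp only [memI_ex] at *
  omega

lemma pairArith02 {a b : ℕ} (ha : 1 ≤ a) (hb : 1 ≤ b) {p q r : ℕ} (h0 : 1 ≤ p) (h2 : 1 ≤ r)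
    (m0 : memI a b (ex (p-1) q r)) (m2 : memI a b (ex p q (r-1))) (hd : a+b+2 ≤ p+q+r) :
    memI a b (ex (p-1) q (r-1)) ∨
      (1 ≤ q ∧ memI a b (ex (p-1) (q-1) r) ∧ memI a b (ex p (q-1) (r-1))) := by
  simp only [memI_ex] at *
  omega

lemma pairArith12 {a b : ℕ} (ha : 1 ≤ a) (hb : 1 ≤ b) {p q r : ℕ} (h1 : 1 ≤ q) (h2 : 1 ≤ r)
    (m1 : memI a b (ex p (q-1) r)) (m2 : memI a b (ex p q (r-1))) (hd : a+b+2 ≤ p+q+r) :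
    memI a b (ex p (q-1) (r-1)) ∨
      (1 ≤ p ∧ memI a b (ex (p-1) (q-1) r) ∧ memI a b (ex (p-1) q (r-1))) := by
  simp only [memI_ex] at *
  omega

lemma tripleArith {a b : ℕ} (ha : 1 ≤ a) (hb : 1 ≤ b) {p q r : ℕ}
    (h0 : 1 ≤ p) (h1 : 1 ≤ q) (h2 : 1 ≤ r)
    (m01 : memI a b (ex (p-1) (q-1) r)) (m02 : memI a b (ex (p-1) q (r-1)))
    (m12 : memI a b (ex p (q-1) (r-1))) :
    memI a b (ex (p-1) (q-1) (r-1)) := by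
  simp only [memI_ex] at *
  omega

lemma kDiff_bas_single (k : Fin 3) (p : PolyR K 3) :
    kDiff K 3 (bas {k} p) = bas ∅ (X k * p) := by
  fin_cases k
  · exact kDiff_bas_0 p
  · exact kDiff_bas_1 p
  · exact kDiff_bas_2 p
lemma deg_single (k : Fin 3) (m : ℕ) : Finsupp.degree (Finsupp.single k 1) = 1 := by
  rw [Finsupp.degree_single]

lemma exact0 {a b j : ℕ} (ha : 1 ≤ a) (hb : 1 ≤ b) (hj : a + b + 1 ≤ j)
    {f : Finset (Fin 3) → PolyR K 3} (hf : f ∈ kosC K 3 (Id3 K a b) 0 j) :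
    f ∈ Submodule.map (kDiff K 3) (kosC K 3 (Id3 K a b) 1 j) := by
  have h0j : (0:ℕ) ≤ j := Nat.zero_le _
  rw [decomp f]
  refine Submodule.sum_mem _ fun μ _ => ?_
  have hF : Pproj μ f ∈ kosC K 3 (Id3 K a b) 0 j := Pproj_mem_kosC h0j hf μ
  have hFsh := shape0 h0j hF
  have hF0 : Pproj μ f ∅ = monomial μ (coeff μ (f ∅)) := by
    rw [Pproj_apply, if_pos (by rw [eT_empty]; exact zero_le)]
    rw [eT_empty, tsub_zero]
  by_cases hc0 : coeff μ (f ∅) = 0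
  · rw [hFsh, hF0, hc0]
    simp
  have hfmem := ((mem_kosC_iff h0j).mp hf ∅).1 (by simp)
  have hmem : memI a b μ := coeff_memI hfmem.1 hc0
  have hdeg : Finsupp.degree μ = j := by
    have := degree_of_coeff hfmem.2 hc0
    omega
  obtain ⟨k, hk1, hk2⟩ := strip ha hb hmem (by omega)
  refine ⟨bas {k} (monomial (μ - Finsupp.single k 1) (coeff μ (f ∅))),
    bas_mem_kosC (by omega) (Finset.card_singleton k) (fun _ => ⟨hk2, ?_⟩), ?_⟩
  · rw [deg_tsub hk1, deg_single k 1, hdeg]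
  · rw [kDiff_bas_single, X_mul_monomial', tsub_add_cancel_of_le hk1, hFsh, hF0]
lemma neg_mon (ν : Fin 3 →₀ ℕ) (c : K) : -(monomial ν c) = monomial ν (-c) :=
  (map_neg (monomial ν) c).symm

lemma pairSol01 {a b j : ℕ} (ha : 1 ≤ a) (hb : 1 ≤ b) {p q r : ℕ} (hj : a + b + 2 ≤ j) (c : K)
    (h0 : c ≠ 0 → 1 ≤ p ∧ memI a b (ex (p-1) q r) ∧ p + q + r = j)
    (h1 : c ≠ 0 → 1 ≤ q ∧ memI a b (ex p (q-1) r)) :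
    ∃ G ∈ kosC K 3 (Id3 K a b) 2 j, kDiff K 3 G =
      bas {0} (monomial (ex (p-1) q r) c) + bas {1} (monomial (ex p (q-1) r) (-c)) := by
  by_cases hc : c = 0
  · refine ⟨0, Submodule.zero_mem _, ?_⟩
    rw [map_zero, hc]
    simp
  obtain ⟨hp, hm0, hsum⟩ := h0 hc
  obtain ⟨hq, hm1⟩ := h1 hc
  rcases pairArith01 ha hb hp hq hm0 hm1 (by omega) with hdir | ⟨hr, hA, hB⟩
  · refine ⟨bas {0,1} (monomial (ex (p-1) (q-1) r) (-c)),
      bas_mem_kosC (by omega) (by decide) (fun _ => ⟨hdir, by rw [deg_ex]; omega⟩), ?_⟩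
    have e1 : ex (p-1) (q-1) r + Finsupp.single 1 1 = ex (p-1) q r := by
      rw [single_one_eq_ex, ex_add]; exact ex_congr (by omega) (by omega) (by omega)
    have e2 : ex (p-1) (q-1) r + Finsupp.single 0 1 = ex p (q-1) r := by
      rw [single_zero_eq_ex, ex_add]; exact ex_congr (by omega) (by omega) (by omega)
    rw [kDiff_bas_01, X_mul_monomial', X_mul_monomial', e1, e2, neg_mon, neg_neg]
  · refine ⟨bas {0,2} (monomial (ex (p-1) q (r-1)) (-c)) +
        bas {1,2} (monomial (ex p (q-1) (r-1)) c),
      Submodule.add_mem _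
        (bas_mem_kosC (by omega) (by decide) (fun _ => ⟨hA, by rw [deg_ex]; omega⟩))
        (bas_mem_kosC (by omega) (by decide) (fun _ => ⟨hB, by rw [deg_ex]; omega⟩)), ?_⟩
    have e1 : ex (p-1) q (r-1) + Finsupp.single 2 1 = ex (p-1) q r := by
      rw [single_two_eq_ex, ex_add]; exact ex_congr (by omega) (by omega) (by omega)
    have e2 : ex (p-1) q (r-1) + Finsupp.single 0 1 = ex p q (r-1) := by
      rw [single_zero_eq_ex, ex_add]; exact ex_congr (by omega) (by omega) (by omega)
    have e3 : ex p (q-1) (r-1) + Finsupp.single 2 1 = ex p (q-1) r := by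
      rw [single_two_eq_ex, ex_add]; exact ex_congr (by omega) (by omega) (by omega)
    have e4 : ex p (q-1) (r-1) + Finsupp.single 1 1 = ex p q (r-1) := by
      rw [single_one_eq_ex, ex_add]; exact ex_congr (by omega) (by omega) (by omega)
    rw [map_add, kDiff_bas_02, kDiff_bas_12, X_mul_monomial', X_mul_monomial',
      X_mul_monomial', X_mul_monomial', e1, e2, e3, e4, neg_mon, neg_mon, neg_neg]
    funext T
    fin_cases T <;>
      simp (config := { decide := true }) [bas] <;>
      rw [← map_add] <;> simp

lemma pairSol02 {a b j : ℕ} (ha : 1 ≤ a) (hb : 1 ≤ b) {p q r : ℕ} (hj : a + b + 2 ≤ j) (c : K)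
    (h0 : c ≠ 0 → 1 ≤ p ∧ memI a b (ex (p-1) q r) ∧ p + q + r = j)
    (h2 : c ≠ 0 → 1 ≤ r ∧ memI a b (ex p q (r-1))) :
    ∃ G ∈ kosC K 3 (Id3 K a b) 2 j, kDiff K 3 G =
      bas {0} (monomial (ex (p-1) q r) c) + bas {2} (monomial (ex p q (r-1)) (-c)) := by
  by_cases hc : c = 0
  · refine ⟨0, Submodule.zero_mem _, ?_⟩
    rw [map_zero, hc]
    simp
  obtain ⟨hp, hm0, hsum⟩ := h0 hc
  obtain ⟨hr, hm2⟩ := h2 hc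
  rcases pairArith02 ha hb hp hr hm0 hm2 (by omega) with hdir | ⟨hq, hA, hB⟩
  · refine ⟨bas {0,2} (monomial (ex (p-1) q (r-1)) (-c)),
      bas_mem_kosC (by omega) (by decide) (fun _ => ⟨hdir, by rw [deg_ex]; omega⟩), ?_⟩
    have e1 : ex (p-1) q (r-1) + Finsupp.single 2 1 = ex (p-1) q r := by
      rw [single_two_eq_ex, ex_add]; exact ex_congr (by omega) (by omega) (by omega)
    have e2 : ex (p-1) q (r-1) + Finsupp.single 0 1 = ex p q (r-1) := by
      rw [single_zero_eq_ex, ex_add]; exact ex_congr (by omega) (by omega) (by omega)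
    rw [kDiff_bas_02, X_mul_monomial', X_mul_monomial', e1, e2, neg_mon, neg_neg]
  · refine ⟨bas {0,1} (monomial (ex (p-1) (q-1) r) (-c)) +
        bas {1,2} (monomial (ex p (q-1) (r-1)) (-c)),
      Submodule.add_mem _
        (bas_mem_kosC (by omega) (by decide) (fun _ => ⟨hA, by rw [deg_ex]; omega⟩))
        (bas_mem_kosC (by omega) (by decide) (fun _ => ⟨hB, by rw [deg_ex]; omega⟩)), ?_⟩
    have e1 : ex (p-1) (q-1) r + Finsupp.single 1 1 = ex (p-1) q r := by
      rw [single_one_eq_ex, ex_add]; exact ex_congr (by omega) (by omega) (by omega)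
    have e2 : ex (p-1) (q-1) r + Finsupp.single 0 1 = ex p (q-1) r := by
      rw [single_zero_eq_ex, ex_add]; exact ex_congr (by omega) (by omega) (by omega)
    have e3 : ex p (q-1) (r-1) + Finsupp.single 2 1 = ex p (q-1) r := by
      rw [single_two_eq_ex, ex_add]; exact ex_congr (by omega) (by omega) (by omega)
    have e4 : ex p (q-1) (r-1) + Finsupp.single 1 1 = ex p q (r-1) := by
      rw [single_one_eq_ex, ex_add]; exact ex_congr (by omega) (by omega) (by omega)
    rw [map_add, kDiff_bas_01, kDiff_bas_12, X_mul_monomial', X_mul_monomial',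
      X_mul_monomial', X_mul_monomial', e1, e2, e3, e4, neg_mon, neg_mon, neg_neg]
    funext T
    fin_cases T <;>
      simp (config := { decide := true }) [bas] <;>
      rw [← map_add] <;> simp

lemma pairSol12 {a b j : ℕ} (ha : 1 ≤ a) (hb : 1 ≤ b) {p q r : ℕ} (hj : a + b + 2 ≤ j) (c : K)
    (h1 : c ≠ 0 → 1 ≤ q ∧ memI a b (ex p (q-1) r) ∧ p + q + r = j)
    (h2 : c ≠ 0 → 1 ≤ r ∧ memI a b (ex p q (r-1))) :
    ∃ G ∈ kosC K 3 (Id3 K a b) 2 j, kDiff K 3 G =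
      bas {1} (monomial (ex p (q-1) r) c) + bas {2} (monomial (ex p q (r-1)) (-c)) := by
  by_cases hc : c = 0
  · refine ⟨0, Submodule.zero_mem _, ?_⟩
    rw [map_zero, hc]
    simp
  obtain ⟨hq, hm1, hsum⟩ := h1 hc
  obtain ⟨hr, hm2⟩ := h2 hc
  rcases pairArith12 ha hb hq hr hm1 hm2 (by omega) with hdir | ⟨hp, hA, hB⟩
  · refine ⟨bas {1,2} (monomial (ex p (q-1) (r-1)) (-c)),
      bas_mem_kosC (by omega) (by decide) (fun _ => ⟨hdir, by rw [deg_ex]; omega⟩), ?_⟩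
    have e1 : ex p (q-1) (r-1) + Finsupp.single 2 1 = ex p (q-1) r := by
      rw [single_two_eq_ex, ex_add]; exact ex_congr (by omega) (by omega) (by omega)
    have e2 : ex p (q-1) (r-1) + Finsupp.single 1 1 = ex p q (r-1) := by
      rw [single_one_eq_ex, ex_add]; exact ex_congr (by omega) (by omega) (by omega)
    rw [kDiff_bas_12, X_mul_monomial', X_mul_monomial', e1, e2, neg_mon, neg_neg]
  · refine ⟨bas {0,1} (monomial (ex (p-1) (q-1) r) c) +
        bas {0,2} (monomial (ex (p-1) q (r-1)) (-c)),
      Submodule.add_mem _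
        (bas_mem_kosC (by omega) (by decide) (fun _ => ⟨hA, by rw [deg_ex]; omega⟩))
        (bas_mem_kosC (by omega) (by decide) (fun _ => ⟨hB, by rw [deg_ex]; omega⟩)), ?_⟩
    have e1 : ex (p-1) (q-1) r + Finsupp.single 1 1 = ex (p-1) q r := by
      rw [single_one_eq_ex, ex_add]; exact ex_congr (by omega) (by omega) (by omega)
    have e2 : ex (p-1) (q-1) r + Finsupp.single 0 1 = ex p (q-1) r := by
      rw [single_zero_eq_ex, ex_add]; exact ex_congr (by omega) (by omega) (by omega)
    have e3 : ex (p-1) q (r-1) + Finsupp.single 2 1 = ex (p-1) q r := by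
      rw [single_two_eq_ex, ex_add]; exact ex_congr (by omega) (by omega) (by omega)
    have e4 : ex (p-1) q (r-1) + Finsupp.single 0 1 = ex p q (r-1) := by
      rw [single_zero_eq_ex, ex_add]; exact ex_congr (by omega) (by omega) (by omega)
    rw [map_add, kDiff_bas_01, kDiff_bas_02, X_mul_monomial', X_mul_monomial',
      X_mul_monomial', X_mul_monomial', e1, e2, e3, e4, neg_mon, neg_mon]
    funext T
    fin_cases T <;>
      simp (config := { decide := true }) [bas] <;>
      rw [← map_add] <;> simp
lemma exact1 {a b j : ℕ} (ha : 1 ≤ a) (hb : 1 ≤ b) (hj : a + b + 2 ≤ j)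
    {f : Finset (Fin 3) → PolyR K 3} (hf : f ∈ kosC K 3 (Id3 K a b) 1 j)
    (hker : kDiff K 3 f = 0) :
    f ∈ Submodule.map (kDiff K 3) (kosC K 3 (Id3 K a b) 2 j) := by
  have h1j : (1:ℕ) ≤ j := by omega
  rw [decomp f]
  refine Submodule.sum_mem _ fun μ _ => ?_
  obtain ⟨p, q, r, rfl⟩ : ∃ p q r, μ = ex p q r := ⟨_, _, _, eq_ex μ⟩
  have hF : Pproj (ex p q r) f ∈ kosC K 3 (Id3 K a b) 1 j := Pproj_mem_kosC h1j hf _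
  have hFsh := shape1 h1j hF
  rw [Pproj_apply_eq, Pproj_apply_eq, Pproj_apply_eq] at hFsh
  simp only [eT_0, eT_1, eT_2, ex_tsub, ex_le_ex, Nat.sub_zero, le_refl, and_true, true_and,
    Nat.zero_le] at hFsh
  set c0 : K := if 1 ≤ p then coeff (ex (p - 1) q r) (f {0}) else 0 with hc0
  set c1 : K := if 1 ≤ q then coeff (ex p (q - 1) r) (f {1}) else 0 with hc1
  set c2 : K := if 1 ≤ r then coeff (ex p q (r - 1)) (f {2}) else 0 with hc2
  -- membership facts
  have hk0 : c0 ≠ 0 → 1 ≤ p ∧ memI a b (ex (p-1) q r) ∧ p + q + r = j := by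
    intro h
    rw [hc0] at h
    by_cases hp : 1 ≤ p
    · rw [if_pos hp] at h
      have hmem := ((mem_kosC_iff h1j).mp hf {0}).1 (by decide)
      have hd := degree_of_coeff hmem.2 h
      rw [deg_ex] at hd
      exact ⟨hp, coeff_memI hmem.1 h, by omega⟩
    · rw [if_neg hp] at h; exact absurd rfl h
  have hk1 : c1 ≠ 0 → 1 ≤ q ∧ memI a b (ex p (q-1) r) ∧ p + q + r = j := by
    intro h
    rw [hc1] at h
    by_cases hp : 1 ≤ q
    · rw [if_pos hp] at h
      have hmem := ((mem_kosC_iff h1j).mp hf {1}).1 (by decide)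
      have hd := degree_of_coeff hmem.2 h
      rw [deg_ex] at hd
      exact ⟨hp, coeff_memI hmem.1 h, by omega⟩
    · rw [if_neg hp] at h; exact absurd rfl h
  have hk2 : c2 ≠ 0 → 1 ≤ r ∧ memI a b (ex p q (r-1)) ∧ p + q + r = j := by
    intro h
    rw [hc2] at h
    by_cases hp : 1 ≤ r
    · rw [if_pos hp] at h
      have hmem := ((mem_kosC_iff h1j).mp hf {2}).1 (by decide)
      have hd := degree_of_coeff hmem.2 h
      rw [deg_ex] at hd
      exact ⟨hp, coeff_memI hmem.1 h, by omega⟩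
    · rw [if_neg hp] at h; exact absurd rfl h
  -- the cycle condition
  have hkF : kDiff K 3 (Pproj (ex p q r) f) = 0 := by
    rw [kDiff_Pproj, hker, map_zero]
  rw [hFsh, map_add, map_add, kDiff_bas_0, kDiff_bas_1, kDiff_bas_2] at hkF
  have h0eval := congrArg (fun g => coeff (ex p q r) (g ∅)) hkF
  simp only [Pi.add_apply, bas_apply_self, Pi.zero_apply, coeff_add, coeff_zero] at h0eval
  have ev0 : coeff (ex p q r) (X 0 * monomial (ex (p-1) q r) c0) = c0 := by
    by_cases h : c0 = 0
    · rw [h, monomial_zero, mul_zero, coeff_zero]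
    · rw [X_mul_monomial', single_zero_eq_ex, ex_add,
        show ex (p-1+1) (q+0) (r+0) = ex p q r from
          ex_congr (by have := (hk0 h).1; omega) (by omega) (by omega), coeff_monomial,
        if_pos rfl]
  have ev1 : coeff (ex p q r) (X 1 * monomial (ex p (q-1) r) c1) = c1 := by
    by_cases h : c1 = 0
    · rw [h, monomial_zero, mul_zero, coeff_zero]
    · rw [X_mul_monomial', single_one_eq_ex, ex_add,
        show ex (p+0) (q-1+1) (r+0) = ex p q r from
          ex_congr (by omega) (by have := (hk1 h).1; omega) (by omega), coeff_monomial,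
        if_pos rfl]
  have ev2 : coeff (ex p q r) (X 2 * monomial (ex p q (r-1)) c2) = c2 := by
    by_cases h : c2 = 0
    · rw [h, monomial_zero, mul_zero, coeff_zero]
    · rw [X_mul_monomial', single_two_eq_ex, ex_add,
        show ex (p+0) (q+0) (r-1+1) = ex p q r from
          ex_congr (by omega) (by omega) (by have := (hk2 h).1; omega), coeff_monomial,
        if_pos rfl]
  rw [ev0, ev1, ev2] at h0eval
  have hsum : c0 + c1 + c2 = 0 := h0eval
  clear h0eval hkF
  -- case analysis
  by_cases h0 : c0 = 0
  · by_cases h1 : c1 = 0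
    · have h2 : c2 = 0 := by rw [h0, h1] at hsum; simpa using hsum
      rw [hFsh, h0, h1, h2]
      simp only [monomial_zero, bas_zero, add_zero]
      exact Submodule.zero_mem _
    · have h2 : c2 = -c1 := by rw [h0] at hsum; linear_combination hsum
      obtain ⟨G, hG, hGd⟩ := pairSol12 ha hb hj c1 hk1
        (fun hne => ⟨(hk2 (by rw [h2]; exact neg_ne_zero.mpr hne)).1,
          (hk2 (by rw [h2]; exact neg_ne_zero.mpr hne)).2.1⟩)
      refine ⟨G, hG, ?_⟩
      rw [hGd, hFsh, h0, h2]
      simp only [monomial_zero, bas_zero, zero_add]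
  · by_cases h1 : c1 = 0
    · have h2 : c2 = -c0 := by rw [h1] at hsum; linear_combination hsum
      obtain ⟨G, hG, hGd⟩ := pairSol02 ha hb hj c0 hk0
        (fun hne => ⟨(hk2 (by rw [h2]; exact neg_ne_zero.mpr hne)).1,
          (hk2 (by rw [h2]; exact neg_ne_zero.mpr hne)).2.1⟩)
      refine ⟨G, hG, ?_⟩
      rw [hGd, hFsh, h1, h2]
      simp only [monomial_zero, bas_zero, add_zero]
    · obtain ⟨G1, hG1, hGd1⟩ := pairSol01 ha hb hj c0 hk0
        (fun _ => ⟨(hk1 h1).1, (hk1 h1).2.1⟩)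
      obtain ⟨G2, hG2, hGd2⟩ := pairSol12 ha hb hj (-c2)
        (fun _ => hk1 h1)
        (fun hne => ⟨(hk2 (neg_ne_zero.mp hne)).1, (hk2 (neg_ne_zero.mp hne)).2.1⟩)
      refine ⟨G1 + G2, Submodule.add_mem _ hG1 hG2, ?_⟩
      rw [map_add, hGd1, hGd2, hFsh]
      funext T
      fin_cases T <;>
        simp (config := { decide := true }) [bas, LinearMap.neg_apply] <;>
        · rw [← map_neg, ← map_neg, ← map_add]
          exact congrArg _ (by linear_combination -hsum)
lemma exact2 {a b j : ℕ} (ha : 1 ≤ a) (hb : 1 ≤ b) (h2j : 2 ≤ j)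
    {f : Finset (Fin 3) → PolyR K 3} (hf : f ∈ kosC K 3 (Id3 K a b) 2 j)
    (hker : kDiff K 3 f = 0) :
    f ∈ Submodule.map (kDiff K 3) (kosC K 3 (Id3 K a b) 3 j) := by
  rw [decomp f]
  refine Submodule.sum_mem _ fun μ _ => ?_
  obtain ⟨p, q, r, rfl⟩ : ∃ p q r, μ = ex p q r := ⟨_, _, _, eq_ex μ⟩
  have hF : Pproj (ex p q r) f ∈ kosC K 3 (Id3 K a b) 2 j := Pproj_mem_kosC h2j hf _
  have hFsh := shape2 h2j hF
  rw [Pproj_apply_eq, Pproj_apply_eq, Pproj_apply_eq] at hFsh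
  simp only [eT_01, eT_02, eT_12, ex_tsub, ex_le_ex, Nat.sub_zero, le_refl, and_true, true_and,
    Nat.zero_le] at hFsh
  set c01 : K := if 1 ≤ p ∧ 1 ≤ q then coeff (ex (p - 1) (q - 1) r) (f {0,1}) else 0 with hc01
  set c02 : K := if 1 ≤ p ∧ 1 ≤ r then coeff (ex (p - 1) q (r - 1)) (f {0,2}) else 0 with hc02
  set c12 : K := if 1 ≤ q ∧ 1 ≤ r then coeff (ex p (q - 1) (r - 1)) (f {1,2}) else 0 with hc12
  have hk01 : c01 ≠ 0 → (1 ≤ p ∧ 1 ≤ q) ∧ memI a b (ex (p-1) (q-1) r) ∧ p + q + r = j := by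
    intro h
    rw [hc01] at h
    by_cases hp : 1 ≤ p ∧ 1 ≤ q
    · rw [if_pos hp] at h
      have hmem := ((mem_kosC_iff h2j).mp hf {0,1}).1 (by decide)
      have hd := degree_of_coeff hmem.2 h
      rw [deg_ex] at hd
      exact ⟨hp, coeff_memI hmem.1 h, by omega⟩
    · rw [if_neg hp] at h; exact absurd rfl h
  have hk02 : c02 ≠ 0 → (1 ≤ p ∧ 1 ≤ r) ∧ memI a b (ex (p-1) q (r-1)) ∧ p + q + r = j := by
    intro h
    rw [hc02] at h
    by_cases hp : 1 ≤ p ∧ 1 ≤ r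
    · rw [if_pos hp] at h
      have hmem := ((mem_kosC_iff h2j).mp hf {0,2}).1 (by decide)
      have hd := degree_of_coeff hmem.2 h
      rw [deg_ex] at hd
      exact ⟨hp, coeff_memI hmem.1 h, by omega⟩
    · rw [if_neg hp] at h; exact absurd rfl h
  have hk12 : c12 ≠ 0 → (1 ≤ q ∧ 1 ≤ r) ∧ memI a b (ex p (q-1) (r-1)) ∧ p + q + r = j := by
    intro h
    rw [hc12] at h
    by_cases hp : 1 ≤ q ∧ 1 ≤ r
    · rw [if_pos hp] at h
      have hmem := ((mem_kosC_iff h2j).mp hf {1,2}).1 (by decide)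
      have hd := degree_of_coeff hmem.2 h
      rw [deg_ex] at hd
      exact ⟨hp, coeff_memI hmem.1 h, by omega⟩
    · rw [if_neg hp] at h; exact absurd rfl h
  -- evaluation lemmas
  have ev01a : coeff (ex (p-1) q r) (X 1 * monomial (ex (p-1) (q-1) r) c01) = c01 := by
    by_cases h : c01 = 0
    · rw [h, monomial_zero, mul_zero, coeff_zero]
    · rw [X_mul_monomial', single_one_eq_ex, ex_add,
        show ex (p-1+0) (q-1+1) (r+0) = ex (p-1) q r from
          ex_congr (by omega) (by have := (hk01 h).1; omega) (by omega), coeff_monomial,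
        if_pos rfl]
  have ev01b : coeff (ex p (q-1) r) (X 0 * monomial (ex (p-1) (q-1) r) c01) = c01 := by
    by_cases h : c01 = 0
    · rw [h, monomial_zero, mul_zero, coeff_zero]
    · rw [X_mul_monomial', single_zero_eq_ex, ex_add,
        show ex (p-1+1) (q-1+0) (r+0) = ex p (q-1) r from
          ex_congr (by have := (hk01 h).1; omega) (by omega) (by omega), coeff_monomial,
        if_pos rfl]
  have ev02a : coeff (ex (p-1) q r) (X 2 * monomial (ex (p-1) q (r-1)) c02) = c02 := by
    by_cases h : c02 = 0
    · rw [h, monomial_zero, mul_zero, coeff_zero]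
    · rw [X_mul_monomial', single_two_eq_ex, ex_add,
        show ex (p-1+0) (q+0) (r-1+1) = ex (p-1) q r from
          ex_congr (by omega) (by omega) (by have := (hk02 h).1; omega), coeff_monomial,
        if_pos rfl]
  have ev12a : coeff (ex p (q-1) r) (X 2 * monomial (ex p (q-1) (r-1)) c12) = c12 := by
    by_cases h : c12 = 0
    · rw [h, monomial_zero, mul_zero, coeff_zero]
    · rw [X_mul_monomial', single_two_eq_ex, ex_add,
        show ex (p+0) (q-1+0) (r-1+1) = ex p (q-1) r from
          ex_congr (by omega) (by omega) (by have := (hk12 h).1; omega), coeff_monomial,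
        if_pos rfl]
  -- cycle conditions
  have hkF : kDiff K 3 (Pproj (ex p q r) f) = 0 := by
    rw [kDiff_Pproj, hker, map_zero]
  rw [hFsh, map_add, map_add, kDiff_bas_01, kDiff_bas_02, kDiff_bas_12] at hkF
  have rel0 := congrArg (fun g => coeff (ex (p-1) q r) (g {0})) hkF
  have rel1 := congrArg (fun g => coeff (ex p (q-1) r) (g {1})) hkF
  simp (config := { decide := true }) [bas, coeff_add, coeff_neg] at rel0 rel1
  rw [ev01a, ev02a] at rel0
  rw [ev01b, ev12a] at rel1
  by_cases h01 : c01 = 0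
  · have h02 : c02 = 0 := by rw [h01] at rel0; simpa using rel0
    have h12 : c12 = 0 := by rw [h01] at rel1; simpa using rel1
    rw [hFsh, h01, h02, h12]
    simp only [monomial_zero, bas_zero, add_zero]
    exact Submodule.zero_mem _
  · have h02 : c02 = -c01 := by linear_combination -rel0
    have h12 : c12 = c01 := by linear_combination -rel1
    have h02ne : c02 ≠ 0 := by rw [h02]; exact neg_ne_zero.mpr h01
    have h12ne : c12 ≠ 0 := by rw [h12]; exact h01
    obtain ⟨⟨hp1, hq1⟩, m01, hsum⟩ := hk01 h01
    obtain ⟨⟨_, hr1⟩, m02, -⟩ := hk02 h02ne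
    obtain ⟨-, m12, -⟩ := hk12 h12ne
    have mtriple := tripleArith ha hb hp1 hq1 hr1 m01 m02 m12
    refine ⟨bas Finset.univ (monomial (ex (p-1) (q-1) (r-1)) c01),
      bas_mem_kosC (by omega) (by decide) (fun _ => ⟨mtriple, by rw [deg_ex]; omega⟩), ?_⟩
    have e1 : ex (p-1) (q-1) (r-1) + Finsupp.single 2 1 = ex (p-1) (q-1) r := by
      rw [single_two_eq_ex, ex_add]; exact ex_congr (by omega) (by omega) (by omega)
    have e2 : ex (p-1) (q-1) (r-1) + Finsupp.single 1 1 = ex (p-1) q (r-1) := by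
      rw [single_one_eq_ex, ex_add]; exact ex_congr (by omega) (by omega) (by omega)
    have e3 : ex (p-1) (q-1) (r-1) + Finsupp.single 0 1 = ex p (q-1) (r-1) := by
      rw [single_zero_eq_ex, ex_add]; exact ex_congr (by omega) (by omega) (by omega)
    rw [kDiff_bas_univ, X_mul_monomial', X_mul_monomial', X_mul_monomial', e1, e2, e3,
      neg_mon, hFsh, h02, h12]
lemma exact3 {a b j : ℕ} {f : Finset (Fin 3) → PolyR K 3}
    (hf : f ∈ kosC K 3 (Id3 K a b) 3 j) (hker : kDiff K 3 f = 0) : f = 0 := by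
  by_cases h3j : 3 ≤ j
  · have hFsh := shape3 h3j hf
    rw [hFsh, kDiff_bas_univ] at hker
    have h12 := congrArg (fun g => g ({1,2} : Finset (Fin 3))) hker
    simp (config := { decide := true }) [bas] at h12
    rw [hFsh, h12, bas_zero]
  · rw [kosC_eq_bot_of_not_le h3j] at hf
    simpa using hf

theorem Ubound {a b i j : ℕ} (ha : 1 ≤ a) (hb : 1 ≤ b) (h : a + b < j - i) :
    kosC K 3 (Id3 K a b) i j ⊓ LinearMap.ker (kDiff K 3) ≤
      Submodule.map (kDiff K 3) (kosC K 3 (Id3 K a b) (i+1) j) := by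
  rintro f ⟨hf, hker⟩
  have hker : kDiff K 3 f = 0 := hker
  match i, h with
  | 0, h => exact exact0 ha hb (by omega) hf
  | 1, h => exact exact1 ha hb (by omega) hf hker
  | 2, h => exact exact2 ha hb (by omega) hf hker
  | 3, h =>
    rw [exact3 hf hker]
    exact Submodule.zero_mem _
  | (n+4), h =>
    rw [eq_zero_of_mem_kosC_big (by omega) hf]
    exact Submodule.zero_mem _

lemma betti_zero_of {a b i j : ℕ} (ha : 1 ≤ a) (hb : 1 ≤ b) (h : a + b < j - i) :
    bettiNum K 3 (Id3 K a b) i j = 0 := by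
  rw [bettiNum, inf_eq_right.mpr (Ubound ha hb h), Nat.sub_self]
lemma homog_fd (d : ℕ) : FiniteDimensional K (homogeneousSubmodule (Fin 3) K d) := by
  have hle : homogeneousSubmodule (Fin 3) K d ≤ Submodule.span K
      ((fun ν => (monomial ν (1:K) : PolyR K 3)) ''
        ((Finset.range (d+1) ×ˢ Finset.range (d+1) ×ˢ
          Finset.range (d+1)).image (fun x => ex x.1 x.2.1 x.2.2) : Finset (Fin 3 →₀ ℕ))) := by
    intro f hf
    rw [← f.support_sum_monomial_coeff]
    refine Submodule.sum_mem _ fun ν hν => ?_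
    have hd := degree_of_coeff hf (mem_support_iff.mp hν)
    have hm : monomial ν (coeff ν f) = (coeff ν f) • (monomial ν (1:K) : PolyR K 3) := by
      rw [smul_monomial, smul_eq_mul, mul_one]
    rw [hm]
    refine Submodule.smul_mem _ _ (Submodule.subset_span ⟨ν, ?_, rfl⟩)
    rw [Finset.coe_image, Set.mem_image]
    have hdeg : ν 0 + ν 1 + ν 2 = d := by
      rw [eq_ex ν, deg_ex] at hd
      simpa using hd
    refine ⟨(ν 0, ν 1, ν 2), ?_, (eq_ex ν).symm⟩
    rw [Finset.mem_coe, Finset.mem_product, Finset.mem_product]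
    simp only [Finset.mem_range]
    omega
  have hfin : ((fun ν => (monomial ν (1:K) : PolyR K 3)) ''
      ((Finset.range (d+1) ×ˢ Finset.range (d+1) ×ˢ
        Finset.range (d+1)).image (fun x => ex x.1 x.2.1 x.2.2) : Finset (Fin 3 →₀ ℕ))).Finite :=
    Set.Finite.image _ (Finset.finite_toSet _)
  haveI := FiniteDimensional.span_of_finite K hfin
  exact Submodule.finiteDimensional_of_le hle

lemma kosC_fd (I : Ideal (PolyR K 3)) (i j : ℕ) : FiniteDimensional K (kosC K 3 I i j) := by
  by_cases hij : i ≤ j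
  · haveI : FiniteDimensional K (homogeneousSubmodule (Fin 3) K (j - i)) := homog_fd _
    let Φ : ↥(kosC K 3 I i j) →ₗ[K]
        (Finset (Fin 3) → ↥(homogeneousSubmodule (Fin 3) K (j - i))) :=
      { toFun := fun f S => ⟨f.1 S, by
          rcases (mem_kosC_iff hij).mp f.2 S with ⟨h1, h2⟩
          by_cases hS : S.card = i
          · exact (h1 hS).2
          · rw [h2 hS]; exact isHomogeneous_zero _ _ _⟩
        map_add' := fun f g => by funext S; rfl
        map_smul' := fun c f => by funext S; rfl }
    have hinj : Function.Injective Φ := by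
      intro f g h
      apply Subtype.ext
      funext S
      exact congrArg Subtype.val (congrFun h S)
    exact FiniteDimensional.of_injective Φ hinj
  · rw [kosC_eq_bot_of_not_le hij]
    infer_instance
lemma betti_witness {a b : ℕ} (ha : 2 ≤ a) (hb : 2 ≤ b) :
    bettiNum K 3 (Id3 K a b) 1 (a + b + 1) ≠ 0 := by
  have ha1 : 1 ≤ a := by omega
  have hb1 : 1 ≤ b := by omega
  set j := a + b + 1 with hj
  set w : Finset (Fin 3) → PolyR K 3 :=
    bas {1} (monomial (ex 1 (a-1) b) (1:K)) + bas {2} (monomial (ex 1 a (b-1)) (-1:K)) with hw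
  have hwkos : w ∈ kosC K 3 (Id3 K a b) 1 j := by
    refine Submodule.add_mem _
      (bas_mem_kosC (by omega) (by decide) (fun _ => ⟨?_, by rw [deg_ex]; omega⟩))
      (bas_mem_kosC (by omega) (by decide) (fun _ => ⟨?_, by rw [deg_ex]; omega⟩))
    · rw [memI_ex]; omega
    · rw [memI_ex]; omega
  have hwker : kDiff K 3 w = 0 := by
    have e1 : ex 1 (a-1) b + Finsupp.single 1 1 = ex 1 a b := by
      rw [single_one_eq_ex, ex_add]; exact ex_congr (by omega) (by omega) (by omega)
    have e2 : ex 1 a (b-1) + Finsupp.single 2 1 = ex 1 a b := by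
      rw [single_two_eq_ex, ex_add]; exact ex_congr (by omega) (by omega) (by omega)
    rw [hw, map_add, kDiff_bas_1, kDiff_bas_2, X_mul_monomial', X_mul_monomial', e1, e2,
      bas_add, ← map_add]
    norm_num
  have hwZ : w ∈ kosC K 3 (Id3 K a b) 1 j ⊓ LinearMap.ker (kDiff K 3) :=
    ⟨hwkos, LinearMap.mem_ker.mpr hwker⟩
  have hwnB : w ∉ Submodule.map (kDiff K 3) (kosC K 3 (Id3 K a b) 2 j) := by
    rintro ⟨g, hg, hgw⟩
    have h2j : 2 ≤ j := by omega
    have hgsh := shape2 h2j hg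
    rw [hgsh, map_add, map_add, kDiff_bas_01, kDiff_bas_02, kDiff_bas_12] at hgw
    have heval := congrArg (fun t => coeff (ex 1 (a-1) b) (t ({1} : Finset (Fin 3)))) hgw
    simp (config := { decide := true }) [bas, coeff_add, coeff_neg] at heval
    -- kill the two coefficients
    have hc1 : coeff (ex 1 (a-1) b) (X 0 * g {0,1}) = 0 := by
      rw [coeff_X_mul']
      rw [if_pos (by rw [Finsupp.mem_support_iff]; simp)]
      by_contra hc
      have hmem := coeff_memI (((mem_kosC_iff h2j).mp hg {0,1}).1 (by decide)).1 hc
      rw [single_zero_eq_ex, ex_tsub, memI_ex] at hmem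
      omega
    have hc2 : coeff (ex 1 (a-1) b) (X 2 * g {1,2}) = 0 := by
      rw [coeff_X_mul']
      rw [if_pos (by rw [Finsupp.mem_support_iff]; simp; omega)]
      by_contra hc
      have hmem := coeff_memI (((mem_kosC_iff h2j).mp hg {1,2}).1 (by decide)).1 hc
      rw [single_two_eq_ex, ex_tsub, memI_ex] at hmem
      omega
    rw [hc1, hc2] at heval
    simp (config := { decide := true }) [hw, bas, coeff_monomial] at heval
  haveI : FiniteDimensional K (kosC K 3 (Id3 K a b) 1 j) := kosC_fd _ _ _
  haveI : FiniteDimensional K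
      ↥(kosC K 3 (Id3 K a b) 1 j ⊓ LinearMap.ker (kDiff K 3)) :=
    Submodule.finiteDimensional_of_le inf_le_left
  have hlt : Submodule.map (kDiff K 3) (kosC K 3 (Id3 K a b) (1 + 1) j) ⊓
      (kosC K 3 (Id3 K a b) 1 j ⊓ LinearMap.ker (kDiff K 3)) <
      kosC K 3 (Id3 K a b) 1 j ⊓ LinearMap.ker (kDiff K 3) := by
    refine lt_of_le_of_ne inf_le_right fun he => hwnB ?_
    rw [← he] at hwZ
    exact (Submodule.mem_inf.mp hwZ).1
  have hfr := Submodule.finrank_lt_finrank_of_lt hlt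
  rw [bettiNum]
  omega
lemma CMreg_Id3 {a b : ℕ} (ha : 2 ≤ a) (hb : 2 ≤ b) : CMreg K 3 (Id3 K a b) = a + b := by
  have hmem : a + b ∈ {d : ℕ | ∃ i j : ℕ, bettiNum K 3 (Id3 K a b) i j ≠ 0 ∧ d = j - i} :=
    ⟨1, a + b + 1, betti_witness ha hb, by omega⟩
  have hbound : ∀ d ∈ {d : ℕ | ∃ i j : ℕ, bettiNum K 3 (Id3 K a b) i j ≠ 0 ∧ d = j - i},
      d ≤ a + b := by
    rintro d ⟨i, j, hne, rfl⟩
    by_contra h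
    exact hne (betti_zero_of (by omega) (by omega) (by omega))
  rw [CMreg]
  exact le_antisymm (csSup_le ⟨_, hmem⟩ hbound) (le_csSup ⟨a + b, hbound⟩ hmem)

lemma gen1_eq (aa : ℕ) : (X 0 * X 1 ^ aa : PolyR K 3) = monomial (ex 1 aa 0) 1 := by
  rw [X_pow_eq_monomial, show (X 0 : PolyR K 3) = monomial (Finsupp.single 0 1) 1 from rfl,
    monomial_mul, one_mul]
  have : Finsupp.single (0 : Fin 3) 1 + Finsupp.single 1 aa = ex 1 aa 0 := by
    ext i; fin_cases i <;> simp [Finsupp.single_apply]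
  rw [this]

lemma gen2_eq (bb : ℕ) : (X 0 * X 2 ^ bb : PolyR K 3) = monomial (ex 1 0 bb) 1 := by
  rw [X_pow_eq_monomial, show (X 0 : PolyR K 3) = monomial (Finsupp.single 0 1) 1 from rfl,
    monomial_mul, one_mul]
  have : Finsupp.single (0 : Fin 3) 1 + Finsupp.single 2 bb = ex 1 0 bb := by
    ext i; fin_cases i <;> simp [Finsupp.single_apply]
  rw [this]

lemma gen3_eq (aa : ℕ) : (X 2 * X 1 ^ aa : PolyR K 3) = monomial (ex 0 aa 1) 1 := by
  rw [X_pow_eq_monomial, show (X 2 : PolyR K 3) = monomial (Finsupp.single 2 1) 1 from rfl,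
    monomial_mul, one_mul]
  have : Finsupp.single (2 : Fin 3) 1 + Finsupp.single 1 aa = ex 0 aa 1 := by
    ext i; fin_cases i <;> simp [Finsupp.single_apply]
  rw [this]

lemma span_eq_Id3 (a b : ℕ) :
    Ideal.span ({X 0 * X 1 ^ a, X 0 * X 2 ^ b, X 2 * X 1 ^ a} : Set (PolyR K 3)) =
      Id3 K a b := by
  rw [Id3]
  congr 1
  rw [Set.image_insert_eq, Set.image_insert_eq, Set.image_singleton,
    gen1_eq, gen2_eq, gen3_eq]

end StmtAux
end Aux2

/-- For the weighted oriented triangle `D₄` with edges `(x₁,x₂), (x₁,x₃), (x₃,x₂)`,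
`w(x₁) = 1`, `w(x₂) > 1`, `w(x₃) > 1`, one has
`reg I(D₄) = w(x₂) + w(x₃) > d₄ + 1` where `d₄ = max w(xᵢ)`. -/
theorem stmt5 {K : Type} [Field K] (w : Fin 3 → ℕ)
    (h1 : w 0 = 1) (h2 : 1 < w 1) (h3 : 1 < w 2) :
    CMreg K 3 (Ideal.span
        ({X 0 * X 1 ^ w 1, X 0 * X 2 ^ w 2, X 2 * X 1 ^ w 1} : Set (PolyR K 3))) =
        w 1 + w 2 ∧
      w 1 + w 2 > max (w 0) (max (w 1) (w 2)) + 1 := by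
  constructor
  · rw [StmtAux.span_eq_Id3]
    exact StmtAux.CMreg_Id3 (by omega) (by omega)
  · omega
end
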